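/- Let α ∈ ℤ_{≥0}^n, let r be the first ascent of α, and let α' be obtained from α by interchanging α_r and α_{r+1}. For every F' ∈ SSF(α'), the number of free entries r strictly below row r of F' equals the number of free entries r+1 strictly below row r of Φ_r(F'), and the number of free entries r+1 strictly below row r of F' equals the number of free entries r strictly below row r of Φ_r(F'). -/

import Mathlib

open Classical MvPolynomial

noncomputable section

namespace Skyline

/-- The box in row `i` and column `j` of the skyline diagram of the composition
`α = (α 1, …, α n)` (rows indexed top to bottom, row `i` has `α i` boxes). -/
def Box (n : ℕ) (α : ℕ → ℕ) (i j : ℕ) : Prop :=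
  1 ≤ i ∧ i ≤ n ∧ 1 ≤ j ∧ j ≤ α i

/-- `F` is a semistandard skyline filling for `α` (with the convention that
`F` takes the value `0` outside of the skyline diagram):
(i) entries weakly decrease from left to right along each row;
(ii) each entry satisfies `F i j ≤ i`;
(iii) the entries in each column are distinct;
(iv) whenever an entry `F i j` lies strictly below an entry `F i' j` in the same
column with `F i j < F i' j`, the box `(i', j+1)` belongs to the diagram and
`F i j < F i' (j+1)`. -/
def IsSSF (n : ℕ) (α : ℕ → ℕ) (F : ℕ → ℕ → ℕ) : Prop :=
  (∀ i j, ¬ Box n α i j → F i j = 0) ∧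
  (∀ i j, Box n α i j → 1 ≤ F i j) ∧
  (∀ i j, 1 ≤ j → Box n α i (j+1) → F i (j+1) ≤ F i j) ∧
  (∀ i j, Box n α i j → F i j ≤ i) ∧
  (∀ i i' j, Box n α i j → Box n α i' j → i ≠ i' → F i j ≠ F i' j) ∧
  (∀ i i' j, Box n α i j → Box n α i' j → i' < i → F i j < F i' j →
      Box n α i' (j+1) ∧ F i j < F i' (j+1))

/-- Column `j` of the filling `F` contains the entry `t`. -/
def ColContains (n : ℕ) (α : ℕ → ℕ) (F : ℕ → ℕ → ℕ) (j t : ℕ) : Prop :=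
  ∃ i, Box n α i j ∧ F i j = t

/-- The unpaired entry `t` in box `(i,j)` and the unpaired entry `t+1` in box
`(i',j')` form a pseudo-free pair: the `t+1` lies strictly above and strictly to
the right of the `t`, and every column strictly between them contains both `t`
and `t+1`. -/
def PseudoFreePair (n : ℕ) (α : ℕ → ℕ) (F : ℕ → ℕ → ℕ) (t i j i' j' : ℕ) : Prop :=
  Box n α i j ∧ F i j = t ∧ ¬ ColContains n α F j (t+1) ∧
  Box n α i' j' ∧ F i' j' = t+1 ∧ ¬ ColContains n α F j' t ∧
  i' < i ∧ j < j' ∧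
  ∀ k, j < k → k < j' → ColContains n α F k t ∧ ColContains n α F k (t+1)

/-- The entry `t` in box `(i,j)` of `F` is free: it is neither paired nor
pseudo-free. -/
def FreeT (n : ℕ) (α : ℕ → ℕ) (F : ℕ → ℕ → ℕ) (t i j : ℕ) : Prop :=
  Box n α i j ∧ F i j = t ∧ ¬ ColContains n α F j (t+1) ∧
  ¬ ∃ i' j', PseudoFreePair n α F t i j i' j'

/-- The entry `t+1` in box `(i,j)` of `F` is free: it is neither paired nor
pseudo-free. -/
def FreeTp1 (n : ℕ) (α : ℕ → ℕ) (F : ℕ → ℕ → ℕ) (t i j : ℕ) : Prop :=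
  Box n α i j ∧ F i j = t+1 ∧ ¬ ColContains n α F j t ∧
  ¬ ∃ i₀ j₀, PseudoFreePair n α F t i₀ j₀ i j

/-- The lowering operator `L_{r,t}`: if row `r` has a free entry `t+1`, replace
the rightmost free `t+1` in row `r` (in column `j`) by `t`, and exchange the
entries `t` and `t+1` in each column `k` of the maximal interval `j' ≤ k < j`
such that `F r k = t+1` and column `k` contains an entry `t` strictly below row
`r`; otherwise do nothing. -/
def Lop (n : ℕ) (α : ℕ → ℕ) (r t : ℕ) (F : ℕ → ℕ → ℕ) : ℕ → ℕ → ℕ :=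
  if {j | FreeTp1 n α F t r j}.Nonempty then
    let j := sSup {j | FreeTp1 n α F t r j}
    let S : Set ℕ := {k | k < j ∧ ∀ m, k ≤ m → m < j →
      F r m = t + 1 ∧ ∃ i, r < i ∧ Box n α i m ∧ F i m = t}
    fun i c =>
      if i = r ∧ c = j then t
      else if c ∈ S ∧ F i c = t then t + 1
      else if c ∈ S ∧ F i c = t + 1 then t
      else F i c
  else F

/-- The raising operator `R_{r,t}`: if row `r` has a free entry `t`, replace
the leftmost free `t` in row `r` (in column `j`) by `t+1`, and exchange the
entries `t` and `t+1` in each column `k` of the maximal interval `j' ≤ k < j`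
such that `F r k = t` and column `k` contains an entry `t+1` strictly below row
`r`; otherwise do nothing. -/
def Rop (n : ℕ) (α : ℕ → ℕ) (r t : ℕ) (F : ℕ → ℕ → ℕ) : ℕ → ℕ → ℕ :=
  if {j | FreeT n α F t r j}.Nonempty then
    let j := sInf {j | FreeT n α F t r j}
    let S : Set ℕ := {k | k < j ∧ ∀ m, k ≤ m → m < j →
      F r m = t ∧ ∃ i, r < i ∧ Box n α i m ∧ F i m = t + 1}
    fun i c =>
      if i = r ∧ c = j then t + 1
      else if c ∈ S ∧ F i c = t then t + 1
      else if c ∈ S ∧ F i c = t + 1 then t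
      else F i c
  else F

/-- The involution `Φ_{r,t}`: with `n₁` the number of free entries `t+1` and
`n₂` the number of free entries `t` in row `r`, apply `L_{r,t}` iterated
`n₁ - n₂` times if `n₁ > n₂`, apply `R_{r,t}` iterated `n₂ - n₁` times if
`n₁ < n₂`, and do nothing if `n₁ = n₂`. -/
def Phi (n : ℕ) (α : ℕ → ℕ) (r t : ℕ) (F : ℕ → ℕ → ℕ) : ℕ → ℕ → ℕ :=
  let n₁ := {j | FreeTp1 n α F t r j}.ncard
  let n₂ := {j | FreeT n α F t r j}.ncard
  if n₂ < n₁ then (Lop n α r t)^[n₁ - n₂] F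
  else if n₁ < n₂ then (Rop n α r t)^[n₂ - n₁] F
  else F

/-- The involution `Φ_r`: apply `Φ_{i,r}` for every row index `i` with
`r + 1 ≤ i ≤ n`. -/
def PhiAll (n : ℕ) (α : ℕ → ℕ) (r : ℕ) (F : ℕ → ℕ → ℕ) : ℕ → ℕ → ℕ :=
  (List.range' (r+1) (n - r)).foldl (fun G i => Phi n α i r G) F

/-- The monomial `x^F = ∏_{(i,j) ∈ D(α)} x_{F(i,j)}` of a filling `F`. -/
def weight (n : ℕ) (α : ℕ → ℕ) (F : ℕ → ℕ → ℕ) : MvPolynomial ℕ ℤ :=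
  ∏ i ∈ Finset.Icc 1 n, ∏ j ∈ Finset.Icc 1 (α i), X (F i j)

/-- The Demazure operator `π_r(f) = ∂_r(x_r f)`, characterized by
`(x_r - x_{r+1}) · π_r(f) = x_r f - x_{r+1} · (s_r f)`. -/
def demazure (r : ℕ) (f : MvPolynomial ℕ ℤ) : MvPolynomial ℕ ℤ :=
  if h : ∃ g, (X r - X (r+1)) * g
      = X r * f - X (r+1) * (rename (Equiv.swap r (r+1)) f)
  then h.choose else 0

/-- The composition obtained from `α` by interchanging `α r` and `α (r+1)`. -/
def swapComp (α : ℕ → ℕ) (r : ℕ) : ℕ → ℕ :=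
  fun i => if i = r then α (r+1) else if i = r+1 then α r else α i

/-- Auxiliary fuelled recursion for the key polynomial: if `α` is not a
partition, apply the Demazure operator `π_i` at the first ascent `i` of `α`
to the key polynomial of the composition with `α i` and `α (i+1)`
interchanged; if `α` is a partition, return `x₁^{α₁} ⋯ xₙ^{αₙ}`. -/
def keyAux (n : ℕ) : ℕ → (ℕ → ℕ) → MvPolynomial ℕ ℤ
  | 0, α => ∏ i ∈ Finset.Icc 1 n, (X i : MvPolynomial ℕ ℤ) ^ (α i)
  | (fuel+1), α =>
    if ∃ i, 1 ≤ i ∧ i < n ∧ α i < α (i+1) then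
      demazure (sInf {i | 1 ≤ i ∧ i < n ∧ α i < α (i+1)})
        (keyAux n fuel (swapComp α (sInf {i | 1 ≤ i ∧ i < n ∧ α i < α (i+1)})))
    else ∏ i ∈ Finset.Icc 1 n, (X i : MvPolynomial ℕ ℤ) ^ (α i)

/-- The key polynomial `κ_α` of the composition `α = (α 1, …, α n)`.
(`n * n` exceeds the number of inversions of `α`, so the fuel never runs out.) -/
def key (n : ℕ) (α : ℕ → ℕ) : MvPolynomial ℕ ℤ :=
  keyAux n (n * n) α

/-- `r` is the first ascent of `α`: `α 1 ≥ α 2 ≥ ⋯ ≥ α r` and `α r < α (r+1)`. -/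
def FirstAscent (n : ℕ) (α : ℕ → ℕ) (r : ℕ) : Prop :=
  1 ≤ r ∧ r + 1 ≤ n ∧ (∀ i, 1 ≤ i → i < r → α (i+1) ≤ α i) ∧ α r < α (r+1)

/-- Move the last `α (r+1) - α r` boxes of row `r` of `F'`, together with their
entries, down to row `r+1` (here `F' ∈ SSF(α')` with `α'` obtained from `α` by
interchanging `α r` and `α (r+1)`). -/
def moveDown (α : ℕ → ℕ) (r : ℕ) (F : ℕ → ℕ → ℕ) : ℕ → ℕ → ℕ :=
  fun i j =>
    if i = r ∧ α r < j then 0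
    else if i = r + 1 ∧ α r < j then F r j
    else F i j

/-- The set `DF(F') = {F₀, F₁, …, F_m}` of derived fillings of `F' ∈ SSF(α')`,
where `m` is the number of free entries `r` in row `r` of `F'`, `F₀` is obtained
from `F'` by moving the last `α (r+1) - α r` boxes of row `r` down to row `r+1`,
and `F_k = R_{r+1,r}^k(F₀)`. -/
def DF (n : ℕ) (α : ℕ → ℕ) (r : ℕ) (F' : ℕ → ℕ → ℕ) : Set (ℕ → ℕ → ℕ) :=
  {F | ∃ k, k ≤ {j | FreeT n (swapComp α r) F' r r j}.ncard ∧
    F = (Rop n α (r+1) r)^[k] (moveDown α r F')}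


section Chains

variable {n : ℕ} {α : ℕ → ℕ} {F : ℕ → ℕ → ℕ}

lemma Box.mono_col {i j j' : ℕ} (h : Box n α i j') (h1 : 1 ≤ j) (hjj : j ≤ j') :
    Box n α i j := ⟨h.1, h.2.1, h1, le_trans hjj h.2.2.2⟩

lemma rowMono (hF : IsSSF n α F) {i j j' : ℕ} (h1 : 1 ≤ j) (hjj : j ≤ j')
    (hb : Box n α i j') : F i j' ≤ F i j := by
  induction j' with
  | zero => exact absurd hb.2.2.1 (by omega)
  | succ m ih =>
    rcases Nat.eq_or_lt_of_le hjj with he | hlt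
    · exact le_of_eq (by rw [he])
    · have h2 : j ≤ m := by omega
      have hbm : Box n α i m := hb.mono_col (by omega) (by omega)
      exact le_trans (hF.2.2.1 i m (by omega) hb) (ih h2 hbm)

lemma col_unique (hF : IsSSF n α F) {i i' j : ℕ} (hb : Box n α i j) (hb' : Box n α i' j)
    (h : F i j = F i' j) : i = i' := by
  by_contra hne
  exact hF.2.2.2.2.1 i i' j hb hb' hne h

/-- Core downward chain lemma. -/
lemma chainCore (hF : IsSSF n α F) {t B b : ℕ}
    (hbase : ∀ v, v < B → Box n α v (b+1) → F v (b+1) = t → False) :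
    ∀ m, (∀ k, b < k → k < m → ∃ w, Box n α w k ∧ F w k = t) →
    ∀ v, v < B → b < m → Box n α v m → F v m = t → False := by
  intro m
  induction m using Nat.strong_induction_on with
  | _ m ih =>
    intro hcols v hvB hbm hbox hval
    rcases Nat.eq_or_lt_of_le (Nat.succ_le_of_lt hbm) with he | hlt
    · subst he
      exact hbase v hvB hbox hval
    · obtain ⟨c, rfl⟩ : ∃ c, m = c + 1 := ⟨m - 1, by omega⟩
      have hbox' : Box n α v c := hbox.mono_col (by omega) (by omega)
      have hle : F v (c+1) ≤ F v c := hF.2.2.1 v c (by omega) hbox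
      rcases Nat.eq_or_lt_of_le (hval ▸ hle) with he2 | hlt2
      · exact ih c (by omega) (fun k hk1 hk2 => hcols k hk1 (by omega)) v hvB (by omega)
          hbox' he2.symm
      · obtain ⟨w, hwb, hwt⟩ := hcols c (by omega) (by omega)
        by_cases hwB : w < B
        · exact ih c (by omega) (fun k hk1 hk2 => hcols k hk1 (by omega)) w hwB (by omega)
            hwb hwt
        · have hvw : v < w := lt_of_lt_of_le hvB (not_lt.mp hwB)
          have := hF.2.2.2.2.2 w v c hwb hbox' hvw (by omega)
          omega

/-- chainT : a `t` strictly below row `r`, strictly left of a `t` in row `r`,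
with all intermediate columns containing a `t`, is impossible. -/
lemma chainT (hF : IsSSF n α F) {t r j₀ i j : ℕ}
    (hb₀ : Box n α r j₀) (hv₀ : F r j₀ = t)
    (hcols : ∀ k, j < k → k < j₀ → ∃ w, Box n α w k ∧ F w k = t)
    (hbi : Box n α i j) (hvi : F i j = t) (hri : r < i) (hjj : j < j₀) : False := by
  refine chainCore hF (t := t) (B := r + 1) (b := j) ?_ j₀ hcols r (by omega) hjj hb₀ hv₀
  intro v hvB hbv1 hval1
  have hbvj : Box n α v j := hbv1.mono_col hbi.2.2.1 (by omega)
  have hle : F v (j+1) ≤ F v j := hF.2.2.1 v j hbi.2.2.1 hbv1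
  have hvi' : v ≠ i := by omega
  rcases Nat.eq_or_lt_of_le (hval1 ▸ hle) with he | hlt
  · exact hF.2.2.2.2.1 i v j hbi hbvj (by omega) (by omega)
  · have := hF.2.2.2.2.2 i v j hbi hbvj (by omega) (by omega)
    omega

/-- chainT' : a `t` in a row `< r` strictly right of column `j₀`, all columns in
between containing a `t`, is impossible when column `j₀` has `t`/`t+1` only
possibly in row `r`, with `t ≤ F r j₀ ≤ t+1`. -/
lemma chainT' (hF : IsSSF n α F) {t r j₀ v₀ m : ℕ}
    (hb₀ : Box n α r j₀) (hlow : t ≤ F r j₀) (hhigh : F r j₀ ≤ t + 1)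
    (hothers : ∀ v, Box n α v j₀ → v ≠ r → F v j₀ ≠ t ∧ F v j₀ ≠ t + 1)
    (hcols : ∀ k, j₀ < k → k < m → ∃ w, Box n α w k ∧ F w k = t)
    (hv₀r : v₀ < r) (hbm : Box n α v₀ m) (hvm : F v₀ m = t) (hjm : j₀ < m) : False := by
  refine chainCore hF (t := t) (B := r) (b := j₀) ?_ m hcols v₀ hv₀r hjm hbm hvm
  intro v hvB hbv1 hval1
  have hbvj : Box n α v j₀ := hbv1.mono_col hb₀.2.2.1 (by omega)
  have hle : F v (j₀+1) ≤ F v j₀ := hF.2.2.1 v j₀ hb₀.2.2.1 hbv1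
  have h2 := hothers v hbvj (by omega)
  have := hF.2.2.2.2.2 r v j₀ hb₀ hbvj hvB (by omega)
  omega

end Chains

section Chains2

variable {n : ℕ} {α : ℕ → ℕ} {F : ℕ → ℕ → ℕ}

/-- chainV (E_R1): no `t+1` strictly up-right of a free `t` at `(r,j₀)` with all
intermediate columns containing both `t` and `t+1`. -/
lemma chainV (hF : IsSSF n α F) {t r j₀ i' : ℕ}
    (hfree : FreeT n α F t r j₀) (hi'r : i' < r) :
    ∀ k, j₀ < k → Box n α i' k → F i' k = t + 1 →
      (∀ m, j₀ < m → m < k → ColContains n α F m t ∧ ColContains n α F m (t+1)) →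
      False := by
  obtain ⟨hb₀, hv₀, hnc, hnp⟩ := hfree
  suffices H : ∀ d k, α i' - k = d → j₀ < k → Box n α i' k → F i' k = t + 1 →
      (∀ m, j₀ < m → m < k → ColContains n α F m t ∧ ColContains n α F m (t+1)) →
      False by
    intro k; exact H _ k rfl
  intro d
  induction d using Nat.strong_induction_on with
  | _ d ih =>
    intro k hd hjk hbk hvk hmid
    by_cases hct : ColContains n α F k t
    · obtain ⟨w, hwb, hwt⟩ := hct
      have hwi : w ≠ i' := fun he => by rw [he] at hwt; omega
      rcases lt_or_gt_of_ne hwi with hlt | hgt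
      · refine chainT' hF hb₀ (le_of_eq hv₀.symm) (by omega) ?_
          (fun kk h1 h2 => (hmid kk h1 h2).1) (by omega) hwb hwt hjk
        intro v hbv hvr
        constructor
        · intro he
          exact hF.2.2.2.2.1 v r j₀ hbv hb₀ hvr (by rw [he, hv₀])
        · intro he; exact hnc ⟨v, hbv, he⟩
      · have h4 := hF.2.2.2.2.2 w i' k hwb hbk hgt (by omega)
        have hle : F i' (k+1) ≤ F i' k := hF.2.2.1 i' k (by omega) h4.1
        have hk1 : k + 1 ≤ α i' := h4.1.2.2.2
        refine ih (α i' - (k+1)) (by omega) (k+1) rfl (by omega) h4.1 (by omega) ?_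
        intro m h1 h2
        rcases Nat.lt_or_ge m k with h3 | h3
        · exact hmid m h1 h3
        · have hmk : m = k := by omega
          subst hmk
          exact ⟨⟨w, hwb, hwt⟩, ⟨i', hbk, hvk⟩⟩
    · exact hnp ⟨i', k, hb₀, hv₀, hnc, hbk, hvk, hct, hi'r, hjk,
        fun m h1 h2 => hmid m h1 h2⟩

/-- chainW (E_L1): no `t+1` strictly up-right of a `t+1` at `(r,j₀)` with all
intermediate columns containing `t+1`. -/
lemma chainW (hF : IsSSF n α F) {t r j₀ : ℕ}
    (hb₀ : Box n α r j₀) (hv₀ : F r j₀ = t + 1) :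
    ∀ k₂ i₂, i₂ < r → j₀ < k₂ → Box n α i₂ k₂ → F i₂ k₂ = t + 1 →
      (∀ m, j₀ < m → m < k₂ → ColContains n α F m (t+1)) → False := by
  intro k₂
  induction k₂ using Nat.strong_induction_on with
  | _ k₂ ih =>
    intro i₂ hir hjk hbk hvk hmid
    have hbj : Box n α i₂ j₀ := hbk.mono_col hb₀.2.2.1 (by omega)
    have hj1 : t + 1 ≤ F i₂ j₀ := hvk ▸ rowMono hF hb₀.2.2.1 (by omega) hbk
    have hne : F i₂ j₀ ≠ t + 1 := fun he =>
      absurd (col_unique hF hbj hb₀ (by rw [he, hv₀])) (by omega)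
    have h4 := hF.2.2.2.2.2 r i₂ j₀ hb₀ hbj hir (by omega)
    set M := {m | j₀ < m ∧ m ≤ k₂ ∧ F i₂ m = t + 1} with hM
    have hMne : M.Nonempty := ⟨k₂, hjk, le_refl _, hvk⟩
    obtain ⟨hms1, hms2, hms3⟩ := Nat.sInf_mem hMne
    set ms := sInf M with hms
    have hms4 : ms ≠ j₀ + 1 := fun he => by rw [he] at hms3; omega
    obtain ⟨c, hc⟩ : ∃ c, ms = c + 1 := ⟨ms - 1, by omega⟩
    have hcj : j₀ < c := by omega
    have hck : c < k₂ := by omega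
    have hbc : Box n α i₂ c := hbk.mono_col (by omega) (by omega)
    have hbms : Box n α i₂ ms := hbk.mono_col (by omega) hms2
    have hge : t + 1 ≤ F i₂ c := hms3 ▸ rowMono hF (by omega) (by omega) hbms
    have hnec : F i₂ c ≠ t + 1 := fun he => by
      have : ms ≤ c := Nat.sInf_le ⟨hcj, by omega, he⟩
      omega
    obtain ⟨u, hub, huv⟩ := hmid c hcj hck
    have hui : u ≠ i₂ := fun he => by rw [he] at huv; omega
    rcases lt_or_gt_of_ne hui with hlt | hgt
    · exact ih c hck u (by omega) hcj hub huv (fun m h1 h2 => hmid m h1 (by omega))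
    · have h5 := hF.2.2.2.2.2 u i₂ c hub hbc hgt (by omega)
      rw [← hc] at h5
      omega

/-- EL3: if `(r,j₀)` is the rightmost free `t+1` in row `r`, then row `r`
contains no `t+1` strictly to the right of `j₀`. -/
lemma EL3 (hF : IsSSF n α F) {t r j₀ : ℕ}
    (hfree : FreeTp1 n α F t r j₀) (hmax : ∀ j, FreeTp1 n α F t r j → j ≤ j₀) :
    ∀ m, j₀ < m → Box n α r m → F r m = t + 1 → False := by
  obtain ⟨hb₀, hv₀, hnc, hnp⟩ := hfree
  have H : ∀ d m, α r - m = d → j₀ < m → Box n α r m → F r m = t + 1 →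
      (∀ k, j₀ < k → k < m → F r k = t + 1 ∧ ∃ w, r < w ∧ Box n α w k ∧ F w k = t) →
      False := by
    intro d
    induction d using Nat.strong_induction_on with
    | _ d ih =>
      intro m hd hjm hbm hvm hinv
      by_cases hct : ColContains n α F m t
      · obtain ⟨w, hwb, hwt⟩ := hct
        have hwr : w ≠ r := fun he => by rw [he] at hwt; omega
        rcases lt_or_gt_of_ne hwr with hlt | hgt
        · refine chainT' hF hb₀ (by omega) (by omega) ?_
            (fun k h1 h2 => ((hinv k h1 h2).2).imp (fun w' hw' => ⟨hw'.2.1, hw'.2.2⟩))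
            hlt hwb hwt hjm
          intro v hbv hvr
          exact ⟨fun he => hnc ⟨v, hbv, he⟩,
            fun he => absurd (col_unique hF hbv hb₀ (by rw [he, hv₀])) hvr⟩
        · have h4 := hF.2.2.2.2.2 w r m hwb hbm hgt (by omega)
          have hle : F r (m+1) ≤ F r m := hF.2.2.1 r m (by omega) h4.1
          have hm1 : m + 1 ≤ α r := h4.1.2.2.2
          refine ih (α r - (m+1)) (by omega) (m+1) rfl (by omega) h4.1 (by omega) ?_
          intro k h1 h2
          rcases Nat.lt_or_ge k m with h3 | h3
          · exact hinv k h1 h3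
          · have hkm : k = m := by omega
            subst hkm
            exact ⟨hvm, w, hgt, hwb, hwt⟩
      · have hfr : FreeTp1 n α F t r m := by
          refine ⟨hbm, hvm, hct, ?_⟩
          rintro ⟨i₀, k₀, hbi₀, hvi₀, hnck₀, _, _, _, hri₀, hk₀m, hintm⟩
          rcases Nat.lt_trichotomy k₀ j₀ with h | h | h
          · exact hnc (hintm j₀ h hjm).1
          · exact hnc ⟨i₀, by rwa [← h], by rwa [← h]⟩
          · have hbr : Box n α r k₀ := hbm.mono_col (by omega) (by omega)
            exact hnck₀ ⟨r, hbr, (hinv k₀ h hk₀m).1⟩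
        have := hmax m hfr
        omega
  intro m hjm hbm hvm
  have hb1 : Box n α r (j₀+1) := hbm.mono_col (by omega) (by omega)
  have h1 : F r (j₀+1) ≤ F r j₀ := hF.2.2.1 r j₀ hb₀.2.2.1 hb1
  have h2 : F r m ≤ F r (j₀+1) := rowMono hF (by omega) (by omega) hbm
  exact H _ (j₀+1) rfl (by omega) hb1 (by omega) (fun k h1 h2 => absurd h1 (by omega))

end Chains2

set_option linter.unusedSectionVars false

/-- The exchange interval of `Rop`. -/
def SR (n : ℕ) (α : ℕ → ℕ) (F : ℕ → ℕ → ℕ) (t r j₀ : ℕ) : Set ℕ :=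
  {k | k < j₀ ∧ ∀ m, k ≤ m → m < j₀ →
    F r m = t ∧ ∃ i, r < i ∧ Box n α i m ∧ F i m = t + 1}

/-- The result of `Rop` written with explicit column `j₀`. -/
def RopG (n : ℕ) (α : ℕ → ℕ) (F : ℕ → ℕ → ℕ) (t r j₀ : ℕ) : ℕ → ℕ → ℕ := fun i c =>
  if i = r ∧ c = j₀ then t + 1
  else if c ∈ SR n α F t r j₀ ∧ F i c = t then t + 1
  else if c ∈ SR n α F t r j₀ ∧ F i c = t + 1 then t
  else F i c

lemma Rop_eq_RopG {n : ℕ} {α : ℕ → ℕ} {F : ℕ → ℕ → ℕ} {t r : ℕ}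
    (hne : {j | FreeT n α F t r j}.Nonempty) :
    Rop n α r t F = RopG n α F t r (sInf {j | FreeT n α F t r j}) := by
  funext i c
  rw [Rop, if_pos hne]
  simp only [RopG, SR]
  congr

section RopSec

variable {n : ℕ} {α : ℕ → ℕ} {F : ℕ → ℕ → ℕ} {t r j₀ : ℕ}

lemma boxOf (hF : IsSSF n α F) {i j : ℕ} (h : F i j ≠ 0) : Box n α i j := by
  by_contra hb; exact h (hF.1 i j hb)

lemma SR_seg {k m : ℕ} (hk : k ∈ SR n α F t r j₀) (hkm : k ≤ m) (hmj : m < j₀) :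
    m ∈ SR n α F t r j₀ :=
  ⟨hmj, fun m' h1 h2 => hk.2 m' (le_trans hkm h1) h2⟩

lemma SR_P {k : ℕ} (hk : k ∈ SR n α F t r j₀) :
    F r k = t ∧ ∃ i, r < i ∧ Box n α i k ∧ F i k = t + 1 :=
  hk.2 k (le_refl _) hk.1

variable (hF : IsSSF n α F) (htr : t < r) (hfree : FreeT n α F t r j₀)
  (hmin : ∀ j, FreeT n α F t r j → j₀ ≤ j)

include hF hfree

lemma ht1 : 1 ≤ t := by
  have h1 := hF.2.1 r j₀ hfree.1
  have h2 := hfree.2.1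
  omega

lemma boxRC {c : ℕ} (hc : c ∈ SR n α F t r j₀ ∨ c = j₀) : Box n α r c := by
  rcases hc with hc | rfl
  · have h1 := (SR_P hc).1
    have h2 := ht1 hF hfree
    exact boxOf hF (by omega)
  · exact hfree.1

lemma valRC {c : ℕ} (hc : c ∈ SR n α F t r j₀ ∨ c = j₀) : F r c = t := by
  rcases hc with hc | rfl
  · exact (SR_P hc).1
  · exact hfree.2.1

/-- in a column of `S ∪ {j₀}` the only `t` is in row `r`. -/
lemma uniq_t {c i : ℕ} (hc : c ∈ SR n α F t r j₀ ∨ c = j₀) (hb : Box n α i c)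
    (hv : F i c = t) : i = r :=
  col_unique hF hb (boxRC hF hfree hc) (by rw [hv, valRC hF hfree hc])

/-- in a column of `S` any `t+1` is strictly below row `r`. -/
lemma uniq_w {c i : ℕ} (hc : c ∈ SR n α F t r j₀) (hb : Box n α i c)
    (hv : F i c = t + 1) : r < i := by
  obtain ⟨w, hwr, hwb, hwv⟩ := (SR_P hc).2
  have : i = w := col_unique hF hb hwb (by rw [hv, hwv])
  omega

/-- no `t+1` whatsoever in column `j₀`. -/
lemma no_w_j₀ {i : ℕ} (hb : Box n α i j₀) : F i j₀ ≠ t + 1 := fun hv =>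
  hfree.2.2.1 ⟨i, hb, hv⟩

/-- Trichotomy for the values of `RopG`. -/
lemma hGc (i c : ℕ) :
    (RopG n α F t r j₀ i c = F i c ∧ ¬(i = r ∧ (c ∈ SR n α F t r j₀ ∨ c = j₀)) ∧
        ¬(c ∈ SR n α F t r j₀ ∧ F i c = t + 1)) ∨
    (i = r ∧ (c ∈ SR n α F t r j₀ ∨ c = j₀) ∧ RopG n α F t r j₀ i c = t + 1 ∧
        F i c = t) ∨
    (r < i ∧ c ∈ SR n α F t r j₀ ∧ F i c = t + 1 ∧ RopG n α F t r j₀ i c = t) := by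
  by_cases h1 : i = r ∧ (c ∈ SR n α F t r j₀ ∨ c = j₀)
  · refine Or.inr (Or.inl ⟨h1.1, h1.2, ?_, h1.1 ▸ valRC hF hfree h1.2⟩)
    have hv : F i c = t := h1.1 ▸ valRC hF hfree h1.2
    unfold RopG
    rcases h1.2 with hS | hj
    · have hcj : c ≠ j₀ := by have := hS.1; omega
      rw [if_neg (by tauto), if_pos ⟨hS, hv⟩]
    · rw [if_pos ⟨h1.1, hj⟩]
  · by_cases h2 : c ∈ SR n α F t r j₀ ∧ F i c = t + 1
    · have hbi : Box n α i c := boxOf hF (by omega)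
      refine Or.inr (Or.inr ⟨uniq_w hF hfree h2.1 hbi h2.2, h2.1, h2.2, ?_⟩)
      have hcj : c ≠ j₀ := by have := h2.1.1; omega
      have hir : ¬(i = r) := by
        intro he; rw [he] at h2; have := valRC hF hfree (Or.inl h2.1); omega
      unfold RopG
      rw [if_neg (by tauto), if_neg (by rintro ⟨hS, hv⟩; omega), if_pos h2]
    · refine Or.inl ⟨?_, h1, h2⟩
      unfold RopG
      have h3 : ¬(i = r ∧ c = j₀) := fun h => h1 ⟨h.1, Or.inr h.2⟩
      rw [if_neg h3]
      by_cases h4 : c ∈ SR n α F t r j₀ ∧ F i c = t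
      · exfalso
        have hbi : Box n α i c := boxOf hF (by have := ht1 hF hfree; omega)
        exact h1 ⟨uniq_t hF hfree (Or.inl h4.1) hbi h4.2, Or.inl h4.1⟩
      · rw [if_neg h4, if_neg h2]

lemma hGr {c : ℕ} (hc : c ∈ SR n α F t r j₀ ∨ c = j₀) :
    RopG n α F t r j₀ r c = t + 1 := by
  rcases hGc hF hfree r c with h | h | h
  · exact absurd ⟨rfl, hc⟩ h.2.1
  · exact h.2.2.1
  · omega

lemma hGu {i c : ℕ} (h1 : ¬(i = r ∧ (c ∈ SR n α F t r j₀ ∨ c = j₀)))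
    (h2 : ¬(c ∈ SR n α F t r j₀ ∧ F i c = t + 1)) :
    RopG n α F t r j₀ i c = F i c := by
  rcases hGc hF hfree i c with h | h | h
  · exact h.1
  · exact absurd ⟨h.1, h.2.1⟩ h1
  · exact absurd ⟨h.2.1, h.2.2.1⟩ h2

include htr hmin

/-- Sublemma A : left boundary of the exchange interval in row `r`. -/
lemma lemA {k : ℕ} (hk1 : 1 ≤ k)
    (hkC : k + 1 ∈ SR n α F t r j₀ ∨ k + 1 = j₀) (hkS : k ∉ SR n α F t r j₀)
    (hbk : Box n α r k) : t + 1 ≤ F r k := by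
  have hb₀ := hfree.1
  have hv₀ := hfree.2.1
  have hnc₀ := hfree.2.2.1
  have hkj : k + 1 ≤ j₀ := by
    rcases hkC with h | h
    · have := h.1; omega
    · omega
  have hge : t ≤ F r k := by
    have h1 : F r (k+1) = t := valRC hF hfree hkC
    have := hF.2.2.1 r k hk1 (boxRC hF hfree hkC)
    omega
  rcases Nat.eq_or_lt_of_le hge with he | h
  · exfalso
    -- F r k = t ; k ∉ S means no t+1 strictly below r in column k
    have hnP : ¬(F r k = t ∧ ∃ i, r < i ∧ Box n α i k ∧ F i k = t + 1) := by
      intro hP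
      apply hkS
      refine ⟨by omega, fun m h1 h2 => ?_⟩
      rcases Nat.eq_or_lt_of_le h1 with he2 | h3
      · rw [← he2]; exact hP
      · rcases hkC with hc | hc
        · exact hc.2 m (by omega) h2
        · omega
    by_cases hW : ColContains n α F k (t+1)
    · -- t+1 above row r in column k
      obtain ⟨i'', hib, hiv⟩ := hW
      have hir : i'' ≠ r := by intro hh; rw [hh] at hiv; omega
      have hilt : i'' < r := by
        rcases Nat.lt_or_ge i'' r with hh | hh
        · exact hh
        · exact absurd ⟨i'', by omega, hib, hiv⟩ (fun hc => hnP ⟨he.symm, hc⟩)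
      have h4 := hF.2.2.2.2.2 r i'' k hbk hib hilt (by omega)
      have h5 : F i'' (k+1) ≤ F i'' k := hF.2.2.1 i'' k hk1 h4.1
      have h6 : F i'' (k+1) = t + 1 := by omega
      -- contradiction with column k+1
      rcases hkC with hc | hc
      · obtain ⟨w, hwr, hwb, hwv⟩ := (SR_P hc).2
        have : i'' = w := col_unique hF h4.1 hwb (by rw [h6, hwv])
        omega
      · exact no_w_j₀ hF hfree (hc ▸ h4.1) (hc ▸ h6)
    · -- (r,k) is an unpaired t strictly left of j₀ : pseudo-free
      have hnf : ¬ FreeT n α F t r k := fun hf => by have := hmin k hf; omega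
      have hpf : ∃ i' j', PseudoFreePair n α F t r k i' j' := by
        by_contra hno
        exact hnf ⟨hbk, he.symm, hW, hno⟩
      obtain ⟨i', j', _, _, _, hbj', hvj', hncj', hir', hkj', hintm⟩ := hpf
      rcases Nat.lt_trichotomy j' j₀ with h | h | h
      · -- j' ∈ S : column j' contains a t at row r
        have hj'S : j' ∈ SR n α F t r j₀ := by
          rcases hkC with hc | hc
          · exact SR_seg hc (by omega) h
          · omega
        exact hncj' ⟨r, boxRC hF hfree (Or.inl hj'S), (SR_P hj'S).1⟩
      · subst h; exact hncj' ⟨r, hb₀, hv₀⟩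
      · exact hnc₀ (hintm j₀ (by omega) h).2
  · omega

/-- Sublemma D : no `t` strictly below row `r` immediately left of the interval. -/
lemma lemD {k : ℕ} (hk1 : 1 ≤ k)
    (hkC : k + 1 ∈ SR n α F t r j₀ ∨ k + 1 = j₀) {i : ℕ} (hri : r < i)
    (hbi : Box n α i k) (hvi : F i k = t) : False := by
  have hbr1 : Box n α r (k+1) := boxRC hF hfree hkC
  have hbr : Box n α r k := hbr1.mono_col hk1 (by omega)
  have hvr1 : F r (k+1) = t := valRC hF hfree hkC
  have hge : t ≤ F r k := by have := hF.2.2.1 r k hk1 hbr1; omega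
  have hne : F r k ≠ t := fun he =>
    absurd (col_unique hF hbi hbr (by rw [hvi, he])) (by omega)
  have h4 := hF.2.2.2.2.2 i r k hbi hbr hri (by omega)
  omega

end RopSec

section RopSSF

set_option linter.unusedSectionVars false

variable {n : ℕ} {α : ℕ → ℕ} {F : ℕ → ℕ → ℕ} {t r j₀ : ℕ}
variable (hF : IsSSF n α F) (htr : t < r) (hfree : FreeT n α F t r j₀)
  (hmin : ∀ j, FreeT n α F t r j → j₀ ≤ j)

include hF htr hfree hmin

lemma RopG_SSF : IsSSF n α (RopG n α F t r j₀) := by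
  have hT1 := ht1 hF hfree
  refine ⟨?_, ?_, ?_, ?_, ?_, ?_⟩
  · -- zero outside
    intro i j hb
    rcases hGc hF hfree i j with h | h | h
    · rw [h.1]; exact hF.1 i j hb
    · obtain ⟨rfl, hC, -, -⟩ := h
      exact absurd (boxRC hF hfree hC) hb
    · have h2 := h.2.2.1
      exact absurd (boxOf hF (by omega)) hb
  · -- positive
    intro i j hb
    rcases hGc hF hfree i j with h | h | h
    · rw [h.1]; exact hF.2.1 i j hb
    · omega
    · omega
  · -- rows weakly decreasing
    intro i j hj1 hb1
    have hrow : F i (j+1) ≤ F i j := hF.2.2.1 i j hj1 hb1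
    rcases hGc hF hfree i (j+1) with h1 | h1 | h1 <;>
      rcases hGc hF hfree i j with h0 | h0 | h0
    · rw [h1.1, h0.1]; exact hrow
    · -- (U1, R0)
      rw [h1.1, h0.2.2.1]
      have := h0.2.2.2
      omega
    · -- (U1, W0)
      have h3 : F i (j+1) ≠ t + 1 := by
        intro he
        have hC : j + 1 ∈ SR n α F t r j₀ ∨ j + 1 = j₀ := by
          rcases Nat.eq_or_lt_of_le (Nat.succ_le_of_lt h0.2.1.1) with h4 | h4
          · exact Or.inr h4
          · exact Or.inl (SR_seg h0.2.1 (by omega) h4)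
        rcases hC with hS | hj
        · exact h1.2.2 ⟨hS, he⟩
        · refine no_w_j₀ hF hfree (i := i) (by rw [← hj]; exact hb1) ?_
          rw [← hj]; exact he
      rw [h1.1, h0.2.2.2]
      have := h0.2.2.1
      omega
    · -- (R1, U0)
      have hir : i = r := h1.1
      have hbij : Box n α i j := hb1.mono_col hj1 (by omega)
      have hbrj : Box n α r j := by rw [← hir]; exact hbij
      have hjS : j ∉ SR n α F t r j₀ := fun hS => h0.2.1 ⟨hir, Or.inl hS⟩
      have h2 := lemA hF htr hfree hmin hj1 h1.2.1 hjS hbrj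
      rw [h1.2.2.1, h0.1, hir]
      omega
    · rw [h1.2.2.1, h0.2.2.1]
    · omega
    · -- (W1, U0)
      rw [h1.2.2.2, h0.1]
      have := h1.2.2.1
      omega
    · omega
    · rw [h1.2.2.2, h0.2.2.2]
  · -- flag
    intro i j hb
    rcases hGc hF hfree i j with h | h | h
    · rw [h.1]; exact hF.2.2.2.1 i j hb
    · rw [h.2.2.1, h.1]; omega
    · rw [h.2.2.2]; omega
  · -- distinct columns
    intro i i' j hbi hbi' hne' heq
    rcases hGc hF hfree i j with h | h | h <;>
      rcases hGc hF hfree i' j with h' | h' | h'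
    · rw [h.1, h'.1] at heq
      exact hF.2.2.2.2.1 i i' j hbi hbi' hne' heq
    · rw [h.1, h'.2.2.1] at heq
      have h3 : j ∉ SR n α F t r j₀ := fun hS => h.2.2 ⟨hS, heq⟩
      rcases h'.2.1 with hS | hj
      · exact h3 hS
      · refine no_w_j₀ hF hfree (i := i) (by rw [← hj]; exact hbi) ?_
        rw [← hj]; exact heq
    · rw [h.1, h'.2.2.2] at heq
      have h3 : i = r := uniq_t hF hfree (Or.inl h'.2.1) hbi heq
      exact h.2.1 ⟨h3, Or.inl h'.2.1⟩
    · rw [h'.1, h.2.2.1] at heq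
      have h3 : j ∉ SR n α F t r j₀ := fun hS => h'.2.2 ⟨hS, heq.symm⟩
      rcases h.2.1 with hS | hj
      · exact h3 hS
      · refine no_w_j₀ hF hfree (i := i') (by rw [← hj]; exact hbi') ?_
        rw [← hj]; exact heq.symm
    · exact hne' (h.1.trans h'.1.symm)
    · rw [h.2.2.1, h'.2.2.2] at heq; omega
    · rw [h'.1, h.2.2.2] at heq
      have h3 : i' = r := uniq_t hF hfree (Or.inl h.2.1) hbi' heq.symm
      exact h'.2.1 ⟨h3, Or.inl h.2.1⟩
    · rw [h'.2.2.1, h.2.2.2] at heq; omega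
    · exact hF.2.2.2.2.1 i i' j hbi hbi' hne' (h.2.2.1.trans h'.2.2.1.symm)
  · -- condition (iv)
    intro i i' j hbi hbi' hii' hlt
    rcases hGc hF hfree i' j with hU' | hR' | hW'
    · -- (i',j) unchanged
      rcases hGc hF hfree i j with hU | hR | hW
      · -- both unchanged
        rw [hU.1, hU'.1] at hlt
        obtain ⟨hbx, hlt2⟩ := hF.2.2.2.2.2 i i' j hbi hbi' hii' hlt
        refine ⟨hbx, ?_⟩
        rcases hGc hF hfree i' (j+1) with h1 | h1 | h1
        · rw [hU.1, h1.1]; omega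
        · rw [hU.1, h1.2.2.1]
          have := h1.2.2.2
          omega
        · rw [hU.1, h1.2.2.2]
          have h2 : F i j ≤ t := by have := h1.2.2.1; omega
          rcases Nat.eq_or_lt_of_le h2 with he | hlt3
          · exact absurd (lemD hF htr hfree hmin hbi.2.2.1 (Or.inl h1.2.1)
              (lt_trans h1.1 hii') hbi he) (fun a => a)
          · omega
      · -- (i,j) row-r changed : i = r, i' < r
        have hir : i = r := hR.1
        rw [hR.2.2.1, hU'.1] at hlt
        have hi'r : i' < r := by omega
        have h3 : F i j < F i' j := by rw [hR.2.2.2]; omega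
        obtain ⟨hbx, hlt2⟩ := hF.2.2.2.2.2 i i' j hbi hbi' hii' h3
        refine ⟨hbx, ?_⟩
        rcases hGc hF hfree i' (j+1) with h1 | h1 | h1
        · rw [hR.2.2.1, h1.1]
          have h4 : F i' (j+1) ≠ t + 1 := by
            intro he
            rcases hR.2.1 with hS | hj
            · rcases Nat.eq_or_lt_of_le (Nat.succ_le_of_lt hS.1) with he2 | hlt3
              · refine no_w_j₀ hF hfree (i := i') (by rw [← he2]; exact hbx) ?_
                rw [← he2]; exact he
              · have := uniq_w hF hfree (SR_seg hS (by omega) hlt3) hbx he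
                omega
            · refine chainV hF hfree hi'r (j+1) (by omega) hbx he ?_
              intro m hm1 hm2
              exact absurd hm1 (by omega)
          have := hR.2.2.2
          omega
        · omega
        · have := h1.1; omega
      · -- (i,j) witness changed
        rw [hW.2.2.2, hU'.1] at hlt
        have h3 : F i' j ≠ t + 1 := fun he => hU'.2.2 ⟨hW.2.1, he⟩
        have h4 : F i' j ≠ t := fun he =>
          hU'.2.1 ⟨uniq_t hF hfree (Or.inl hW.2.1) hbi' he, Or.inl hW.2.1⟩
        have h5 : F i j < F i' j := by rw [hW.2.2.1]; omega
        obtain ⟨hbx, hlt2⟩ := hF.2.2.2.2.2 i i' j hbi hbi' hii' h5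
        refine ⟨hbx, ?_⟩
        rw [hW.2.2.2]
        rcases hGc hF hfree i' (j+1) with h1 | h1 | h1
        · rw [h1.1]
          have := hW.2.2.1
          omega
        · rw [h1.2.2.1]; omega
        · rw [h1.2.2.2]
          have := h1.2.2.1
          have := hW.2.2.1
          omega
    · -- (i',j) is the row-r changed cell
      have hir : i' = r := hR'.1
      rw [hR'.2.2.1] at hlt
      rcases hR'.2.1 with hS | hj
      · have hC1 : j + 1 ∈ SR n α F t r j₀ ∨ j + 1 = j₀ := by
          rcases Nat.eq_or_lt_of_le (Nat.succ_le_of_lt hS.1) with he | hlt3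
          · exact Or.inr he
          · exact Or.inl (SR_seg hS (by omega) hlt3)
        refine ⟨by rw [hir]; exact boxRC hF hfree hC1, ?_⟩
        rw [hir, hGr hF hfree hC1]
        omega
      · -- j = j₀
        rcases hGc hF hfree i j with hU | hR | hW
        · rw [hU.1] at hlt
          have h2 : F i j ≠ t := by
            intro he
            have := uniq_t hF hfree (Or.inr hj) hbi he
            omega
          have h3 : F i j < F i' j := by rw [hR'.2.2.2]; omega
          obtain ⟨hbx, hlt2⟩ := hF.2.2.2.2.2 i i' j hbi hbi' hii' h3
          refine ⟨hbx, ?_⟩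
          rcases hGc hF hfree i' (j+1) with h1 | h1 | h1
          · rw [hU.1, h1.1]; omega
          · rcases h1.2.1 with hS1 | hj1
            · have := hS1.1; omega
            · omega
          · have := h1.1; omega
        · have := hR.1; omega
        · have := hW.2.1.1; omega
    · -- (i',j) is a witness changed cell
      rw [hW'.2.2.2] at hlt
      rcases hGc hF hfree i j with hU | hR | hW
      · rw [hU.1] at hlt
        have h5 : F i j < F i' j := by rw [hW'.2.2.1]; omega
        obtain ⟨hbx, hlt2⟩ := hF.2.2.2.2.2 i i' j hbi hbi' hii' h5
        refine ⟨hbx, ?_⟩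
        rcases hGc hF hfree i' (j+1) with h1 | h1 | h1
        · rw [hU.1, h1.1]; omega
        · rw [hU.1, h1.2.2.1]
          have := h1.2.2.2
          omega
        · rw [hU.1, h1.2.2.2]; omega
      · have := hR.1
        have := hW'.1
        omega
      · rw [hW.2.2.2] at hlt; omega

end RopSSF

section RopFree

set_option linter.unusedSectionVars false

variable {n : ℕ} {α : ℕ → ℕ} {F : ℕ → ℕ → ℕ} {t r j₀ : ℕ}
variable (hF : IsSSF n α F) (htr : t < r) (hfree : FreeT n α F t r j₀)
  (hmin : ∀ j, FreeT n α F t r j → j₀ ≤ j)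

include hF hfree

/-- in a column of `S`, the new filling has a `t` strictly below row `r`. -/
lemma wit_G {c : ℕ} (hc : c ∈ SR n α F t r j₀) :
    ∃ w, r < w ∧ Box n α w c ∧ RopG n α F t r j₀ w c = t := by
  obtain ⟨w, hwr, hwb, hwv⟩ := (SR_P hc).2
  refine ⟨w, hwr, hwb, ?_⟩
  rcases hGc hF hfree w c with h | h | h
  · exact absurd ⟨hc, hwv⟩ h.2.2
  · omega
  · exact h.2.2.2

lemma colG_ne {c v : ℕ} (hc : c ≠ j₀) :
    ColContains n α (RopG n α F t r j₀) c v ↔ ColContains n α F c v := by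
  constructor
  · rintro ⟨i, hb, hval⟩
    rcases hGc hF hfree i c with h | h | h
    · exact ⟨i, hb, by rw [← h.1]; exact hval⟩
    · have hS : c ∈ SR n α F t r j₀ := by
        rcases h.2.1 with hS | hj
        · exact hS
        · exact absurd hj hc
      obtain ⟨w, hwr, hwb, hwv⟩ := (SR_P hS).2
      exact ⟨w, hwb, by rw [hwv]; omega⟩
    · exact ⟨r, boxRC hF hfree (Or.inl h.2.1), by rw [valRC hF hfree (Or.inl h.2.1)]; omega⟩
  · rintro ⟨i, hb, hval⟩
    rcases hGc hF hfree i c with h | h | h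
    · exact ⟨i, hb, by rw [h.1]; exact hval⟩
    · have hS : c ∈ SR n α F t r j₀ := by
        rcases h.2.1 with hS | hj
        · exact hS
        · exact absurd hj hc
      obtain ⟨w, hwr, hwb, hwv⟩ := wit_G hF hfree hS
      exact ⟨w, hwb, by rw [hwv]; omega⟩
    · refine ⟨r, boxRC hF hfree (Or.inl h.2.1), ?_⟩
      rw [hGr hF hfree (Or.inl h.2.1)]
      omega
/-- no `t` in column `j₀` of the new filling. -/
lemma colG_j₀_t : ¬ ColContains n α (RopG n α F t r j₀) j₀ t := by
  rintro ⟨i, hb, hval⟩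
  rcases hGc hF hfree i j₀ with h | h | h
  · have hFv : F i j₀ = t := by rw [← h.1]; exact hval
    exact h.2.1 ⟨uniq_t hF hfree (Or.inr rfl) hb hFv, Or.inr rfl⟩
  · omega
  · have := h.2.1.1; omega

/-- Pseudo-free pairs are the same for `F` and the new filling. -/
lemma pairG_iff (i j i' j' : ℕ) :
    PseudoFreePair n α (RopG n α F t r j₀) t i j i' j' ↔
    PseudoFreePair n α F t i j i' j' := by
  have hb₀ := hfree.1
  have hv₀ := hfree.2.1
  have hnc₀ := hfree.2.2.1
  constructor
  · rintro ⟨hbi, hGvi, hncGt1, hbi', hGvi', hncGt, hii, hjj, hint⟩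
    -- the t-end
    have hU : RopG n α F t r j₀ i j = F i j ∧ ¬(i = r ∧ (j ∈ SR n α F t r j₀ ∨ j = j₀)) ∧
        ¬(j ∈ SR n α F t r j₀ ∧ F i j = t + 1) := by
      rcases hGc hF hfree i j with h | h | h
      · exact h
      · omega
      · exfalso
        exact hncGt1 ⟨r, boxRC hF hfree (Or.inl h.2.1), hGr hF hfree (Or.inl h.2.1)⟩
    have hFvi : F i j = t := by rw [← hU.1]; exact hGvi
    have hjne : j ≠ j₀ := fun hj =>
      hU.2.1 ⟨uniq_t hF hfree (Or.inr hj) hbi hFvi, Or.inr hj⟩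
    -- the (t+1)-end
    have hU' : RopG n α F t r j₀ i' j' = F i' j' ∧
        ¬(i' = r ∧ (j' ∈ SR n α F t r j₀ ∨ j' = j₀)) ∧
        ¬(j' ∈ SR n α F t r j₀ ∧ F i' j' = t + 1) := by
      rcases hGc hF hfree i' j' with h | h | h
      · exact h
      · exfalso
        rcases h.2.1 with hS | hj
        · obtain ⟨w, hwr, hwb, hwv⟩ := wit_G hF hfree hS
          exact hncGt ⟨w, hwb, hwv⟩
        · -- pair in G ending at (r,j₀) : impossible by chainT
          have hir : i' = r := h.1
          refine chainT hF hb₀ hv₀ (j := j) ?_ hbi hFvi (by omega) (by omega)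
          intro k h1 h2
          have h3 := (hint k h1 (by omega)).1
          exact (colG_ne hF hfree (by omega)).mp h3
      · omega
    have hFvi' : F i' j' = t + 1 := by rw [← hU'.1]; exact hGvi'
    have hjne' : j' ≠ j₀ := fun hj => no_w_j₀ hF hfree (by rw [← hj]; exact hbi')
      (by rw [← hj]; exact hFvi')
    refine ⟨hbi, hFvi, fun h => hncGt1 ((colG_ne hF hfree hjne).mpr h), hbi', hFvi',
      fun h => hncGt ((colG_ne hF hfree hjne').mpr h), hii, hjj, ?_⟩
    intro k h1 h2
    have hk := hint k h1 h2
    by_cases hkj : k = j₀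
    · exfalso
      rw [hkj] at hk
      exact colG_j₀_t hF hfree hk.1
    · exact ⟨(colG_ne hF hfree hkj).mp hk.1, (colG_ne hF hfree hkj).mp hk.2⟩
  · rintro ⟨hbi, hFvi, hncFt1, hbi', hFvi', hncFt, hii, hjj, hint⟩
    -- the t-end in G
    have hU : RopG n α F t r j₀ i j = F i j ∧ ¬(i = r ∧ (j ∈ SR n α F t r j₀ ∨ j = j₀)) ∧
        ¬(j ∈ SR n α F t r j₀ ∧ F i j = t + 1) := by
      rcases hGc hF hfree i j with h | h | h
      · exact h
      · exfalso
        rcases h.2.1 with hS | hj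
        · obtain ⟨w, hwr, hwb, hwv⟩ := (SR_P hS).2
          exact hncFt1 ⟨w, hwb, hwv⟩
        · -- F-pair from (r,j₀) : contradicts freeness of (r,j₀)
          have hir : i = r := h.1
          refine hfree.2.2.2 ⟨i', j', hb₀, hv₀, hnc₀, hbi', hFvi', hncFt, by omega,
            by omega, fun k h1 h2 => hint k (by omega) h2⟩
      · omega
    have hjne : j ≠ j₀ := fun hj =>
      hU.2.1 ⟨uniq_t hF hfree (Or.inr hj) hbi hFvi, Or.inr hj⟩
    have hU' : RopG n α F t r j₀ i' j' = F i' j' := by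
      rcases hGc hF hfree i' j' with h | h | h
      · exact h.1
      · omega
      · exact absurd ⟨r, boxRC hF hfree (Or.inl h.2.1), valRC hF hfree (Or.inl h.2.1)⟩
          hncFt
    have hjne' : j' ≠ j₀ := fun hj => no_w_j₀ hF hfree (by rw [← hj]; exact hbi')
      (by rw [← hj]; exact hFvi')
    refine ⟨hbi, by rw [hU.1]; exact hFvi, fun h => hncFt1 ((colG_ne hF hfree hjne).mp h),
      hbi', by rw [hU']; exact hFvi', fun h => hncFt ((colG_ne hF hfree hjne').mp h),
      hii, hjj, ?_⟩
    intro k h1 h2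
    have hk := hint k h1 h2
    by_cases hkj : k = j₀
    · exfalso
      rw [hkj] at hk
      exact hnc₀ hk.2
    · exact ⟨(colG_ne hF hfree hkj).mpr hk.1, (colG_ne hF hfree hkj).mpr hk.2⟩

lemma freeT_G_iff (i j : ℕ) :
    FreeT n α (RopG n α F t r j₀) t i j ↔
    FreeT n α F t i j ∧ ¬(i = r ∧ j = j₀) := by
  constructor
  · rintro ⟨hb, hGv, hnc, hnp⟩
    rcases hGc hF hfree i j with h | h | h
    · have hFv : F i j = t := by rw [← h.1]; exact hGv
      have hjne : j ≠ j₀ := fun hj =>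
        h.2.1 ⟨uniq_t hF hfree (Or.inr hj) hb hFv, Or.inr hj⟩
      refine ⟨⟨hb, hFv, fun hc => hnc ((colG_ne hF hfree hjne).mpr hc), ?_⟩,
        fun hc => h.2.1 ⟨hc.1, Or.inr hc.2⟩⟩
      rintro ⟨i', j', hp⟩
      exact hnp ⟨i', j', (pairG_iff hF hfree i j i' j').mpr hp⟩
    · omega
    · exact absurd ⟨r, boxRC hF hfree (Or.inl h.2.1), hGr hF hfree (Or.inl h.2.1)⟩ hnc
  · rintro ⟨⟨hb, hv, hnc, hnp⟩, hne2⟩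
    rcases hGc hF hfree i j with h | h | h
    · have hjne : j ≠ j₀ := fun hj => hne2 ⟨uniq_t hF hfree (Or.inr hj) hb hv, hj⟩
      refine ⟨hb, by rw [h.1]; exact hv, fun hc => hnc ((colG_ne hF hfree hjne).mp hc), ?_⟩
      rintro ⟨i', j', hp⟩
      exact hnp ⟨i', j', (pairG_iff hF hfree i j i' j').mp hp⟩
    · rcases h.2.1 with hS | hj
      · obtain ⟨w, hwr, hwb, hwv⟩ := (SR_P hS).2
        exact absurd ⟨w, hwb, hwv⟩ hnc
      · exact absurd ⟨h.1, hj⟩ hne2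
    · omega

lemma freeTp1_G_iff (i j : ℕ) :
    FreeTp1 n α (RopG n α F t r j₀) t i j ↔
    FreeTp1 n α F t i j ∨ (i = r ∧ j = j₀) := by
  constructor
  · rintro ⟨hb, hGv, hnc, hnp⟩
    rcases hGc hF hfree i j with h | h | h
    · have hFv : F i j = t + 1 := by rw [← h.1]; exact hGv
      have hjne : j ≠ j₀ := fun hj => no_w_j₀ hF hfree (by rw [← hj]; exact hb)
        (by rw [← hj]; exact hFv)
      refine Or.inl ⟨hb, hFv, fun hc => hnc ((colG_ne hF hfree hjne).mpr hc), ?_⟩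
      rintro ⟨i₀, k₀, hp⟩
      exact hnp ⟨i₀, k₀, (pairG_iff hF hfree i₀ k₀ i j).mpr hp⟩
    · rcases h.2.1 with hS | hj
      · obtain ⟨w, hwr, hwb, hwv⟩ := wit_G hF hfree hS
        exact absurd ⟨w, hwb, hwv⟩ hnc
      · exact Or.inr ⟨h.1, hj⟩
    · omega
  · rintro (⟨hb, hv, hnc, hnp⟩ | ⟨hir, hjj⟩)
    · rcases hGc hF hfree i j with h | h | h
      · have hjne : j ≠ j₀ := fun hj => no_w_j₀ hF hfree (by rw [← hj]; exact hb)
          (by rw [← hj]; exact hv)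
        refine ⟨hb, by rw [h.1]; exact hv, fun hc => hnc ((colG_ne hF hfree hjne).mp hc), ?_⟩
        rintro ⟨i₀, k₀, hp⟩
        exact hnp ⟨i₀, k₀, (pairG_iff hF hfree i₀ k₀ i j).mp hp⟩
      · omega
      · exact absurd ⟨r, boxRC hF hfree (Or.inl h.2.1), valRC hF hfree (Or.inl h.2.1)⟩ hnc
    · subst hir; subst hjj
      refine ⟨hfree.1, hGr hF hfree (Or.inr rfl), colG_j₀_t hF hfree, ?_⟩
      rintro ⟨i₀, k₀, hp⟩
      have hp' := (pairG_iff hF hfree i₀ k₀ i j).mp hp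
      have := hp'.2.2.2.2.1
      have := hfree.2.1
      omega

end RopFree

/-- Full bookkeeping for one application of `Rop`. -/
theorem Rop_step {n : ℕ} {α : ℕ → ℕ} {F : ℕ → ℕ → ℕ} {t r : ℕ}
    (hF : IsSSF n α F) (htr : t < r)
    (hne : {j | FreeT n α F t r j}.Nonempty) :
    IsSSF n α (Rop n α r t F) ∧
    FreeT n α F t r (sInf {j | FreeT n α F t r j}) ∧
    (∀ i j, FreeT n α (Rop n α r t F) t i j ↔
      FreeT n α F t i j ∧ ¬(i = r ∧ j = sInf {j | FreeT n α F t r j})) ∧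
    (∀ i j, FreeTp1 n α (Rop n α r t F) t i j ↔
      FreeTp1 n α F t i j ∨ (i = r ∧ j = sInf {j | FreeT n α F t r j})) := by
  have hfree : FreeT n α F t r (sInf {j | FreeT n α F t r j}) := Nat.sInf_mem hne
  have hmin : ∀ j, FreeT n α F t r j → sInf {j | FreeT n α F t r j} ≤ j :=
    fun j hj => Nat.sInf_le hj
  rw [Rop_eq_RopG hne]
  exact ⟨RopG_SSF hF htr hfree hmin, hfree,
    fun i j => freeT_G_iff hF hfree i j, fun i j => freeTp1_G_iff hF hfree i j⟩

/-- The exchange interval of `Lop`. -/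
def SL (n : ℕ) (α : ℕ → ℕ) (F : ℕ → ℕ → ℕ) (t r j₀ : ℕ) : Set ℕ :=
  {k | k < j₀ ∧ ∀ m, k ≤ m → m < j₀ →
    F r m = t + 1 ∧ ∃ i, r < i ∧ Box n α i m ∧ F i m = t}

/-- The result of `Lop` written with explicit column `j₀`. -/
def LopG (n : ℕ) (α : ℕ → ℕ) (F : ℕ → ℕ → ℕ) (t r j₀ : ℕ) : ℕ → ℕ → ℕ := fun i c =>
  if i = r ∧ c = j₀ then t
  else if c ∈ SL n α F t r j₀ ∧ F i c = t then t + 1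
  else if c ∈ SL n α F t r j₀ ∧ F i c = t + 1 then t
  else F i c

lemma Lop_eq_LopG {n : ℕ} {α : ℕ → ℕ} {F : ℕ → ℕ → ℕ} {t r : ℕ}
    (hne : {j | FreeTp1 n α F t r j}.Nonempty) :
    Lop n α r t F = LopG n α F t r (sSup {j | FreeTp1 n α F t r j}) := by
  funext i c
  rw [Lop, if_pos hne]
  simp only [LopG, SL]
  congr

section LopSec

set_option linter.unusedSectionVars false

variable {n : ℕ} {α : ℕ → ℕ} {F : ℕ → ℕ → ℕ} {t r j₀ : ℕ}

lemma SL_seg {k m : ℕ} (hk : k ∈ SL n α F t r j₀) (hkm : k ≤ m) (hmj : m < j₀) :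
    m ∈ SL n α F t r j₀ :=
  ⟨hmj, fun m' h1 h2 => hk.2 m' (le_trans hkm h1) h2⟩

lemma SL_P {k : ℕ} (hk : k ∈ SL n α F t r j₀) :
    F r k = t + 1 ∧ ∃ i, r < i ∧ Box n α i k ∧ F i k = t :=
  hk.2 k (le_refl _) hk.1

variable (hF : IsSSF n α F) (htr : t < r) (ht : 1 ≤ t)
  (hfree : FreeTp1 n α F t r j₀)
  (hmax : ∀ j, FreeTp1 n α F t r j → j ≤ j₀)

include hF ht hfree

lemma boxRCL {c : ℕ} (hc : c ∈ SL n α F t r j₀ ∨ c = j₀) : Box n α r c := by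
  rcases hc with hc | rfl
  · have h1 := (SL_P hc).1
    exact boxOf hF (by omega)
  · exact hfree.1

lemma valRCL {c : ℕ} (hc : c ∈ SL n α F t r j₀ ∨ c = j₀) : F r c = t + 1 := by
  rcases hc with hc | rfl
  · exact (SL_P hc).1
  · exact hfree.2.1

/-- in a column of `S ∪ {j₀}` the only `t+1` is in row `r`. -/
lemma uniq_wL {c i : ℕ} (hc : c ∈ SL n α F t r j₀ ∨ c = j₀) (hb : Box n α i c)
    (hv : F i c = t + 1) : i = r :=
  col_unique hF hb (boxRCL hF ht hfree hc) (by rw [hv, valRCL hF ht hfree hc])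

/-- in a column of `S` any `t` is strictly below row `r`. -/
lemma uniq_tL {c i : ℕ} (hc : c ∈ SL n α F t r j₀) (hb : Box n α i c)
    (hv : F i c = t) : r < i := by
  obtain ⟨w, hwr, hwb, hwv⟩ := (SL_P hc).2
  have : i = w := col_unique hF hb hwb (by rw [hv, hwv])
  omega

/-- no `t` whatsoever in column `j₀`. -/
lemma no_t_j₀ {i : ℕ} (hb : Box n α i j₀) : F i j₀ ≠ t := fun hv =>
  hfree.2.2.1 ⟨i, hb, hv⟩

/-- Trichotomy for the values of `LopG`. -/
lemma hGcL (i c : ℕ) :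
    (LopG n α F t r j₀ i c = F i c ∧ ¬(i = r ∧ (c ∈ SL n α F t r j₀ ∨ c = j₀)) ∧
        ¬(c ∈ SL n α F t r j₀ ∧ F i c = t)) ∨
    (i = r ∧ (c ∈ SL n α F t r j₀ ∨ c = j₀) ∧ LopG n α F t r j₀ i c = t ∧
        F i c = t + 1) ∨
    (r < i ∧ c ∈ SL n α F t r j₀ ∧ F i c = t ∧ LopG n α F t r j₀ i c = t + 1) := by
  have hT : 1 ≤ t := ht
  by_cases h1 : i = r ∧ (c ∈ SL n α F t r j₀ ∨ c = j₀)
  · refine Or.inr (Or.inl ⟨h1.1, h1.2, ?_, h1.1 ▸ valRCL hF ht hfree h1.2⟩)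
    have hv : F i c = t + 1 := h1.1 ▸ valRCL hF ht hfree h1.2
    unfold LopG
    rcases h1.2 with hS | hj
    · have hcj : c ≠ j₀ := by have := hS.1; omega
      rw [if_neg (by tauto), if_neg (by rintro ⟨-, hv2⟩; omega), if_pos ⟨hS, hv⟩]
    · rw [if_pos ⟨h1.1, hj⟩]
  · by_cases h2 : c ∈ SL n α F t r j₀ ∧ F i c = t
    · have hbi : Box n α i c := boxOf hF (by omega)
      refine Or.inr (Or.inr ⟨uniq_tL hF ht hfree h2.1 hbi h2.2, h2.1, h2.2, ?_⟩)
      have hcj : c ≠ j₀ := by have := h2.1.1; omega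
      unfold LopG
      rw [if_neg (by tauto), if_pos h2]
    · refine Or.inl ⟨?_, h1, h2⟩
      unfold LopG
      have h3 : ¬(i = r ∧ c = j₀) := fun h => h1 ⟨h.1, Or.inr h.2⟩
      rw [if_neg h3, if_neg h2]
      by_cases h4 : c ∈ SL n α F t r j₀ ∧ F i c = t + 1
      · exfalso
        have hbi : Box n α i c := boxOf hF (by omega)
        exact h1 ⟨uniq_wL hF ht hfree (Or.inl h4.1) hbi h4.2, Or.inl h4.1⟩
      · rw [if_neg h4]

lemma hGrL {c : ℕ} (hc : c ∈ SL n α F t r j₀ ∨ c = j₀) :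
    LopG n α F t r j₀ r c = t := by
  rcases hGcL hF ht hfree r c with h | h | h
  · exact absurd ⟨rfl, hc⟩ h.2.1
  · exact h.2.2.1
  · omega

include htr hmax

/-- Sublemma D'' : no `t` strictly below row `r` immediately left of the interval. -/
lemma lemDL {k : ℕ} (hk1 : 1 ≤ k)
    (hkC : k + 1 ∈ SL n α F t r j₀ ∨ k + 1 = j₀) (hkS : k ∉ SL n α F t r j₀)
    {i : ℕ} (hri : r < i) (hbi : Box n α i k) (hvi : F i k = t) : False := by
  have hb₀ := hfree.1
  have hv₀ := hfree.2.1
  have hnc₀ := hfree.2.2.1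
  have hkj : k + 1 ≤ j₀ := by
    rcases hkC with h | h
    · have := h.1; omega
    · omega
  have hbr1 : Box n α r (k+1) := boxRCL hF ht hfree hkC
  have hbr : Box n α r k := hbr1.mono_col hk1 (by omega)
  have hvr1 : F r (k+1) = t + 1 := valRCL hF ht hfree hkC
  have hge : t + 1 ≤ F r k := by have := hF.2.2.1 r k hk1 hbr1; omega
  rcases Nat.eq_or_lt_of_le hge with he | hgt
  · -- F r k = t+1 : then k ∈ S, contradiction
    apply hkS
    refine ⟨by omega, fun m h1 h2 => ?_⟩
    rcases Nat.eq_or_lt_of_le h1 with he2 | h3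
    · exact ⟨by rw [← he2, ← he], ⟨i, hri, by rw [← he2]; exact hbi, by rw [← he2]; exact hvi⟩⟩
    · rcases hkC with hc | hc
      · exact hc.2 m (by omega) h2
      · omega
  · -- F r k ≥ t+2
    by_cases hW : ColContains n α F k (t+1)
    · obtain ⟨u, hub, huv⟩ := hW
      have hur : u ≠ r := fun hh => by rw [hh] at huv; omega
      have hui : u ≠ i := fun hh => by rw [hh] at huv; omega
      rcases Nat.lt_or_ge u i with hu1 | hu1
      · -- u < i : (iv) pushes the t+1 into column k+1, forcing row r there
        obtain ⟨hbx, hlt2⟩ := hF.2.2.2.2.2 i u k hbi hub hu1 (by omega)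
        have h5 : F u (k+1) ≤ F u k := hF.2.2.1 u k hk1 hbx
        have h6 : F u (k+1) = t + 1 := by omega
        have : u = r := uniq_wL hF ht hfree hkC hbx h6
        omega
      · -- u > i > r : (iv) against the big value in row r
        obtain ⟨hbx, hlt2⟩ := hF.2.2.2.2.2 u r k hub hbr (by omega) (by omega)
        have h5 : F r (k+1) = t + 1 := hvr1
        omega
    · -- column k has no t+1 : pseudo-free pair with (r,j₀), contradiction
      refine hfree.2.2.2 ⟨i, k, hbi, hvi, hW, hb₀, hv₀, hnc₀, hri, by omega, ?_⟩
      intro m h1 h2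
      have hmS : m ∈ SL n α F t r j₀ := by
        rcases hkC with hc | hc
        · exact SL_seg hc (by omega) h2
        · omega
      obtain ⟨w, hwr, hwb, hwv⟩ := (SL_P hmS).2
      exact ⟨⟨w, hwb, hwv⟩, ⟨r, boxRCL hF ht hfree (Or.inl hmS), (SL_P hmS).1⟩⟩

end LopSec

section LopSSF

set_option linter.unusedSectionVars false

variable {n : ℕ} {α : ℕ → ℕ} {F : ℕ → ℕ → ℕ} {t r j₀ : ℕ}
variable (hF : IsSSF n α F) (htr : t < r) (ht : 1 ≤ t)
  (hfree : FreeTp1 n α F t r j₀)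
  (hmax : ∀ j, FreeTp1 n α F t r j → j ≤ j₀)

include hF htr ht hfree hmax

lemma LopG_SSF : IsSSF n α (LopG n α F t r j₀) := by
  refine ⟨?_, ?_, ?_, ?_, ?_, ?_⟩
  · -- zero outside
    intro i j hb
    rcases hGcL hF ht hfree i j with h | h | h
    · rw [h.1]; exact hF.1 i j hb
    · obtain ⟨rfl, hC, -, -⟩ := h
      exact absurd (boxRCL hF ht hfree hC) hb
    · have h2 := h.2.2.1
      exact absurd (boxOf hF (by omega)) hb
  · -- positive
    intro i j hb
    rcases hGcL hF ht hfree i j with h | h | h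
    · rw [h.1]; exact hF.2.1 i j hb
    · omega
    · omega
  · -- rows weakly decreasing
    intro i j hj1 hb1
    have hrow : F i (j+1) ≤ F i j := hF.2.2.1 i j hj1 hb1
    rcases hGcL hF ht hfree i (j+1) with h1 | h1 | h1 <;>
      rcases hGcL hF ht hfree i j with h0 | h0 | h0
    · rw [h1.1, h0.1]; exact hrow
    · -- (U1, R0) : uses EL3
      have h3 : F i (j+1) ≠ t + 1 := by
        intro he
        have hjj : j = j₀ := by
          rcases h0.2.1 with hS | hj
          · exfalso
            rcases Nat.eq_or_lt_of_le (Nat.succ_le_of_lt hS.1) with he2 | hlt3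
            · exact h1.2.1 ⟨h0.1, Or.inr he2⟩
            · exact h1.2.1 ⟨h0.1, Or.inl (SL_seg hS (by omega) hlt3)⟩
          · exact hj
        refine EL3 hF hfree hmax (j+1) (by omega) ?_ ?_
        · rw [← h0.1]; exact hb1
        · rw [← h0.1]; exact he
      rw [h1.1, h0.2.2.1]
      have := h0.2.2.2
      omega
    · -- (U1, W0)
      rw [h1.1, h0.2.2.2]
      have := h0.2.2.1
      omega
    · -- (R1, U0)
      rw [h1.2.2.1, h0.1]
      have h2 := h1.2.2.2
      omega
    · rw [h1.2.2.1, h0.2.2.1]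
    · omega
    · -- (W1, U0)
      rw [h1.2.2.2, h0.1]
      have h2 := h1.2.2.1
      have h3 : F i j ≠ t := by
        intro he
        have hjS : j ∉ SL n α F t r j₀ := fun hS => h0.2.2 ⟨hS, he⟩
        exact lemDL hF htr ht hfree hmax hj1 (Or.inl h1.2.1) hjS h1.1
          (hb1.mono_col hj1 (by omega)) he
      omega
    · omega
    · rw [h1.2.2.2, h0.2.2.2]
  · -- flag
    intro i j hb
    rcases hGcL hF ht hfree i j with h | h | h
    · rw [h.1]; exact hF.2.2.2.1 i j hb
    · rw [h.2.2.1, h.1]; omega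
    · rw [h.2.2.2]; omega
  · -- distinct columns
    intro i i' j hbi hbi' hne' heq
    rcases hGcL hF ht hfree i j with h | h | h <;>
      rcases hGcL hF ht hfree i' j with h' | h' | h'
    · rw [h.1, h'.1] at heq
      exact hF.2.2.2.2.1 i i' j hbi hbi' hne' heq
    · rw [h.1, h'.2.2.1] at heq
      have h3 : j ∉ SL n α F t r j₀ := fun hS => h.2.2 ⟨hS, heq⟩
      rcases h'.2.1 with hS | hj
      · exact h3 hS
      · refine no_t_j₀ hF ht hfree (i := i) (by rw [← hj]; exact hbi) ?_
        rw [← hj]; exact heq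
    · rw [h.1, h'.2.2.2] at heq
      have h3 : i = r := uniq_wL hF ht hfree (Or.inl h'.2.1) hbi heq
      exact h.2.1 ⟨h3, Or.inl h'.2.1⟩
    · rw [h'.1, h.2.2.1] at heq
      have h3 : j ∉ SL n α F t r j₀ := fun hS => h'.2.2 ⟨hS, heq.symm⟩
      rcases h.2.1 with hS | hj
      · exact h3 hS
      · refine no_t_j₀ hF ht hfree (i := i') (by rw [← hj]; exact hbi') ?_
        rw [← hj]; exact heq.symm
    · exact hne' (h.1.trans h'.1.symm)
    · rw [h.2.2.1, h'.2.2.2] at heq; omega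
    · rw [h'.1, h.2.2.2] at heq
      have h3 : i' = r := uniq_wL hF ht hfree (Or.inl h.2.1) hbi' heq.symm
      exact h'.2.1 ⟨h3, Or.inl h.2.1⟩
    · rw [h'.2.2.1, h.2.2.2] at heq; omega
    · exact hF.2.2.2.2.1 i i' j hbi hbi' hne' (h.2.2.1.trans h'.2.2.1.symm)
  · -- condition (iv)
    intro i i' j hbi hbi' hii' hlt
    rcases hGcL hF ht hfree i' j with hU' | hR' | hW'
    · -- (i',j) unchanged
      rcases hGcL hF ht hfree i j with hU | hR | hW
      · -- both unchanged
        rw [hU.1, hU'.1] at hlt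
        obtain ⟨hbx, hlt2⟩ := hF.2.2.2.2.2 i i' j hbi hbi' hii' hlt
        refine ⟨hbx, ?_⟩
        rcases hGcL hF ht hfree i' (j+1) with h1 | h1 | h1
        · rw [hU.1, h1.1]; omega
        · -- (i',j+1) is the row-r changed cell, new value t
          rw [hU.1, h1.2.2.1]
          have h2 : F i j ≤ t := by have := h1.2.2.2; omega
          rcases Nat.eq_or_lt_of_le h2 with he | hlt3
          · exfalso
            have hjS : j ∉ SL n α F t r j₀ := fun hS => hU'.2.1 ⟨h1.1, Or.inl hS⟩
            exact lemDL hF htr ht hfree hmax hbi.2.2.1 h1.2.1 hjS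
              (by omega) hbi he
          · omega
        · rw [hU.1, h1.2.2.2]
          have := h1.2.2.1
          omega
      · -- (i,j) row-r changed : i = r, new value t, i' < r
        rw [hR.2.2.1, hU'.1] at hlt
        have h3 : F i' j ≠ t + 1 := by
          intro he
          have := uniq_wL hF ht hfree hR.2.1 hbi' he
          omega
        have h4 : F i j < F i' j := by rw [hR.2.2.2]; omega
        obtain ⟨hbx, hlt2⟩ := hF.2.2.2.2.2 i i' j hbi hbi' hii' h4
        refine ⟨hbx, ?_⟩
        rw [hR.2.2.1]
        rcases hGcL hF ht hfree i' (j+1) with h1 | h1 | h1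
        · rw [h1.1]
          have := hR.2.2.2
          omega
        · have := h1.1; omega
        · have := h1.2.2.1; omega
      · -- (i,j) witness changed : r < i, new value t+1
        rw [hW.2.2.2, hU'.1] at hlt
        have h5 : F i j < F i' j := by rw [hW.2.2.1]; omega
        obtain ⟨hbx, hlt2⟩ := hF.2.2.2.2.2 i i' j hbi hbi' hii' h5
        refine ⟨hbx, ?_⟩
        rw [hW.2.2.2]
        rcases hGcL hF ht hfree i' (j+1) with h1 | h1 | h1
        · rw [h1.1]
          have h6 : F i' (j+1) ≠ t + 1 := by
            intro he
            have hC1 : j + 1 ∈ SL n α F t r j₀ ∨ j + 1 = j₀ := by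
              rcases Nat.eq_or_lt_of_le (Nat.succ_le_of_lt hW.2.1.1) with he2 | hlt3
              · exact Or.inr he2
              · exact Or.inl (SL_seg hW.2.1 (by omega) hlt3)
            have := uniq_wL hF ht hfree hC1 hbx he
            exact hU'.2.1 ⟨this, Or.inl hW.2.1⟩
          omega
        · exact absurd ⟨h1.1, Or.inl hW.2.1⟩ hU'.2.1
        · have := h1.2.2.1; omega
    · -- (i',j) is the row-r changed cell : new value t
      rw [hR'.2.2.1] at hlt
      have hri : r < i := by have := hR'.1; omega
      rcases hGcL hF ht hfree i j with hU | hR | hW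
      · rw [hU.1] at hlt
        have h3 : F i j < F i' j := by rw [hR'.2.2.2]; omega
        obtain ⟨hbx, hlt2⟩ := hF.2.2.2.2.2 i i' j hbi hbi' hii' h3
        refine ⟨hbx, ?_⟩
        rw [hU.1]
        rcases hR'.2.1 with hS | hj
        · have hC1 : j + 1 ∈ SL n α F t r j₀ ∨ j + 1 = j₀ := by
            rcases Nat.eq_or_lt_of_le (Nat.succ_le_of_lt hS.1) with he | hlt3
            · exact Or.inr he
            · exact Or.inl (SL_seg hS (by omega) hlt3)
          rw [hR'.1, hGrL hF ht hfree hC1]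
          omega
        · rcases hGcL hF ht hfree i' (j+1) with h1 | h1 | h1
          · rw [h1.1]; omega
          · rcases h1.2.1 with hS1 | hj1
            · have := hS1.1; omega
            · omega
          · have := h1.1
            have := hR'.1
            omega
      · have := hR.1; omega
      · rw [hW.2.2.2] at hlt; omega
    · -- (i',j) is a witness changed cell : new value t+1
      rw [hW'.2.2.2] at hlt
      rcases hGcL hF ht hfree i j with hU | hR | hW
      · rw [hU.1] at hlt
        have h4 : F i j ≠ t := fun he =>
          hF.2.2.2.2.1 i i' j hbi hbi' (by omega) (by rw [he, hW'.2.2.1])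
        have h5 : F i j < F i' j := by rw [hW'.2.2.1]; omega
        obtain ⟨hbx, hlt2⟩ := hF.2.2.2.2.2 i i' j hbi hbi' hii' h5
        refine ⟨hbx, ?_⟩
        rw [hU.1]
        rcases hGcL hF ht hfree i' (j+1) with h1 | h1 | h1
        · rw [h1.1]; omega
        · have := hW'.1
          have := h1.1
          omega
        · rw [h1.2.2.2]; omega
      · have := hR.1
        have := hW'.1
        omega
      · rw [hW.2.2.2] at hlt; omega

end LopSSF

section LopFree

set_option linter.unusedSectionVars false

variable {n : ℕ} {α : ℕ → ℕ} {F : ℕ → ℕ → ℕ} {t r j₀ : ℕ}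
variable (hF : IsSSF n α F) (htr : t < r) (ht : 1 ≤ t)
  (hfree : FreeTp1 n α F t r j₀)
  (hmax : ∀ j, FreeTp1 n α F t r j → j ≤ j₀)

include hF ht hfree

lemma wit_GL {c : ℕ} (hc : c ∈ SL n α F t r j₀) :
    ∃ w, r < w ∧ Box n α w c ∧ LopG n α F t r j₀ w c = t + 1 := by
  obtain ⟨w, hwr, hwb, hwv⟩ := (SL_P hc).2
  refine ⟨w, hwr, hwb, ?_⟩
  rcases hGcL hF ht hfree w c with h | h | h
  · exact absurd ⟨hc, hwv⟩ h.2.2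
  · omega
  · exact h.2.2.2

lemma colGL_ne {c v : ℕ} (hc : c ≠ j₀) :
    ColContains n α (LopG n α F t r j₀) c v ↔ ColContains n α F c v := by
  constructor
  · rintro ⟨i, hb, hval⟩
    rcases hGcL hF ht hfree i c with h | h | h
    · exact ⟨i, hb, by rw [← h.1]; exact hval⟩
    · have hS : c ∈ SL n α F t r j₀ := by
        rcases h.2.1 with hS | hj
        · exact hS
        · exact absurd hj hc
      obtain ⟨w, hwr, hwb, hwv⟩ := (SL_P hS).2
      exact ⟨w, hwb, by rw [hwv]; omega⟩
    · exact ⟨r, boxRCL hF ht hfree (Or.inl h.2.1), by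
        rw [valRCL hF ht hfree (Or.inl h.2.1)]; omega⟩
  · rintro ⟨i, hb, hval⟩
    rcases hGcL hF ht hfree i c with h | h | h
    · exact ⟨i, hb, by rw [h.1]; exact hval⟩
    · have hS : c ∈ SL n α F t r j₀ := by
        rcases h.2.1 with hS | hj
        · exact hS
        · exact absurd hj hc
      obtain ⟨w, hwr, hwb, hwv⟩ := wit_GL hF ht hfree hS
      exact ⟨w, hwb, by rw [hwv]; omega⟩
    · refine ⟨r, boxRCL hF ht hfree (Or.inl h.2.1), ?_⟩
      rw [hGrL hF ht hfree (Or.inl h.2.1)]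
      omega

/-- no `t+1` in column `j₀` of the new filling. -/
lemma colGL_j₀_w : ¬ ColContains n α (LopG n α F t r j₀) j₀ (t+1) := by
  rintro ⟨i, hb, hval⟩
  rcases hGcL hF ht hfree i j₀ with h | h | h
  · have hFv : F i j₀ = t + 1 := by rw [← h.1]; exact hval
    exact h.2.1 ⟨uniq_wL hF ht hfree (Or.inr rfl) hb hFv, Or.inr rfl⟩
  · omega
  · have := h.2.1.1; omega

lemma pairGL_iff (i j i' j' : ℕ) :
    PseudoFreePair n α (LopG n α F t r j₀) t i j i' j' ↔
    PseudoFreePair n α F t i j i' j' := by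
  have hb₀ := hfree.1
  have hv₀ := hfree.2.1
  have hnc₀ := hfree.2.2.1
  constructor
  · rintro ⟨hbi, hGvi, hncGt1, hbi', hGvi', hncGt, hii, hjj, hint⟩
    -- the t-end
    have hU : LopG n α F t r j₀ i j = F i j ∧ ¬(i = r ∧ (j ∈ SL n α F t r j₀ ∨ j = j₀)) ∧
        ¬(j ∈ SL n α F t r j₀ ∧ F i j = t) := by
      rcases hGcL hF ht hfree i j with h | h | h
      · exact h
      · exfalso
        rcases h.2.1 with hS | hj
        · obtain ⟨w, hwr, hwb, hwv⟩ := wit_GL hF ht hfree hS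
          exact hncGt1 ⟨w, hwb, hwv⟩
        · -- a pair in G with t-end (r,j₀) : impossible by chainW
          have hFvi' : F i' j' = t + 1 := by
            rcases hGcL hF ht hfree i' j' with h' | h' | h'
            · rw [← h'.1]; exact hGvi'
            · omega
            · have := h'.1
              have := h.1
              omega
          refine chainW hF hb₀ hv₀ j' i' (by omega) (by omega) hbi' hFvi' ?_
          intro m h1 h2
          have h3 := (hint m (by omega) h2).2
          exact (colGL_ne hF ht hfree (by omega)).mp h3
      · omega
    have hFvi : F i j = t := by rw [← hU.1]; exact hGvi
    have hjne : j ≠ j₀ := fun hj => no_t_j₀ hF ht hfree (by rw [← hj]; exact hbi)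
      (by rw [← hj]; exact hFvi)
    -- the (t+1)-end
    have hU' : LopG n α F t r j₀ i' j' = F i' j' ∧
        ¬(i' = r ∧ (j' ∈ SL n α F t r j₀ ∨ j' = j₀)) ∧
        ¬(j' ∈ SL n α F t r j₀ ∧ F i' j' = t) := by
      rcases hGcL hF ht hfree i' j' with h | h | h
      · exact h
      · omega
      · exfalso
        exact hncGt ⟨r, boxRCL hF ht hfree (Or.inl h.2.1),
          hGrL hF ht hfree (Or.inl h.2.1)⟩
    have hFvi' : F i' j' = t + 1 := by rw [← hU'.1]; exact hGvi'
    have hjne' : j' ≠ j₀ := fun hj =>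
      hU'.2.1 ⟨uniq_wL hF ht hfree (Or.inr hj) hbi' hFvi', Or.inr hj⟩
    refine ⟨hbi, hFvi, fun h => hncGt1 ((colGL_ne hF ht hfree hjne).mpr h), hbi', hFvi',
      fun h => hncGt ((colGL_ne hF ht hfree hjne').mpr h), hii, hjj, ?_⟩
    intro k h1 h2
    have hk := hint k h1 h2
    by_cases hkj : k = j₀
    · exfalso
      rw [hkj] at hk
      exact colGL_j₀_w hF ht hfree hk.2
    · exact ⟨(colGL_ne hF ht hfree hkj).mp hk.1, (colGL_ne hF ht hfree hkj).mp hk.2⟩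
  · rintro ⟨hbi, hFvi, hncFt1, hbi', hFvi', hncFt, hii, hjj, hint⟩
    -- the t-end in G
    have hU : LopG n α F t r j₀ i j = F i j ∧ ¬(i = r ∧ (j ∈ SL n α F t r j₀ ∨ j = j₀)) ∧
        ¬(j ∈ SL n α F t r j₀ ∧ F i j = t) := by
      rcases hGcL hF ht hfree i j with h | h | h
      · exact h
      · omega
      · exact absurd ⟨r, boxRCL hF ht hfree (Or.inl h.2.1),
          valRCL hF ht hfree (Or.inl h.2.1)⟩ hncFt1
    have hjne : j ≠ j₀ := fun hj => no_t_j₀ hF ht hfree (by rw [← hj]; exact hbi)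
      (by rw [← hj]; exact hFvi)
    have hU' : LopG n α F t r j₀ i' j' = F i' j' := by
      rcases hGcL hF ht hfree i' j' with h | h | h
      · exact h.1
      · exfalso
        rcases h.2.1 with hS | hj
        · obtain ⟨w, hwr, hwb, hwv⟩ := (SL_P hS).2
          exact hncFt ⟨w, hwb, hwv⟩
        · -- an F-pair with (t+1)-end (r,j₀) : contradicts freeness of (r,j₀)
          have hir : i' = r := h.1
          refine hfree.2.2.2 ⟨i, j, hbi, hFvi, hncFt1, hb₀, hv₀, hnc₀, by omega,
            by omega, fun k h1 h2 => hint k h1 (by omega)⟩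
      · omega
    have hjne' : j' ≠ j₀ := by
      intro hj
      rcases hGcL hF ht hfree i' j' with h | h | h
      · exact h.2.1 ⟨uniq_wL hF ht hfree (Or.inr hj) hbi' hFvi', Or.inr hj⟩
      · omega
      · omega
    refine ⟨hbi, by rw [hU.1]; exact hFvi, fun h => hncFt1 ((colGL_ne hF ht hfree hjne).mp h),
      hbi', by rw [hU']; exact hFvi', fun h => hncFt ((colGL_ne hF ht hfree hjne').mp h),
      hii, hjj, ?_⟩
    intro k h1 h2
    have hk := hint k h1 h2
    by_cases hkj : k = j₀
    · exfalso
      rw [hkj] at hk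
      exact hnc₀ hk.1
    · exact ⟨(colGL_ne hF ht hfree hkj).mpr hk.1, (colGL_ne hF ht hfree hkj).mpr hk.2⟩

lemma freeTp1_GL_iff (i j : ℕ) :
    FreeTp1 n α (LopG n α F t r j₀) t i j ↔
    FreeTp1 n α F t i j ∧ ¬(i = r ∧ j = j₀) := by
  constructor
  · rintro ⟨hb, hGv, hnc, hnp⟩
    rcases hGcL hF ht hfree i j with h | h | h
    · have hFv : F i j = t + 1 := by rw [← h.1]; exact hGv
      have hjne : j ≠ j₀ := fun hj =>
        h.2.1 ⟨uniq_wL hF ht hfree (Or.inr hj) hb hFv, Or.inr hj⟩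
      refine ⟨⟨hb, hFv, fun hc => hnc ((colGL_ne hF ht hfree hjne).mpr hc), ?_⟩,
        fun hc => h.2.1 ⟨hc.1, Or.inr hc.2⟩⟩
      rintro ⟨i₀, k₀, hp⟩
      exact hnp ⟨i₀, k₀, (pairGL_iff hF ht hfree i₀ k₀ i j).mpr hp⟩
    · omega
    · exact absurd ⟨r, boxRCL hF ht hfree (Or.inl h.2.1),
        hGrL hF ht hfree (Or.inl h.2.1)⟩ hnc
  · rintro ⟨⟨hb, hv, hnc, hnp⟩, hne2⟩
    rcases hGcL hF ht hfree i j with h | h | h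
    · have hjne : j ≠ j₀ := fun hj =>
        hne2 ⟨uniq_wL hF ht hfree (Or.inr hj) hb hv, hj⟩
      refine ⟨hb, by rw [h.1]; exact hv, fun hc => hnc ((colGL_ne hF ht hfree hjne).mp hc), ?_⟩
      rintro ⟨i₀, k₀, hp⟩
      exact hnp ⟨i₀, k₀, (pairGL_iff hF ht hfree i₀ k₀ i j).mp hp⟩
    · rcases h.2.1 with hS | hj
      · obtain ⟨w, hwr, hwb, hwv⟩ := (SL_P hS).2
        exact absurd ⟨w, hwb, hwv⟩ hnc
      · exact absurd ⟨h.1, hj⟩ hne2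
    · omega

lemma freeT_GL_iff (i j : ℕ) :
    FreeT n α (LopG n α F t r j₀) t i j ↔
    FreeT n α F t i j ∨ (i = r ∧ j = j₀) := by
  constructor
  · rintro ⟨hb, hGv, hnc, hnp⟩
    rcases hGcL hF ht hfree i j with h | h | h
    · have hFv : F i j = t := by rw [← h.1]; exact hGv
      have hjne : j ≠ j₀ := fun hj => no_t_j₀ hF ht hfree (by rw [← hj]; exact hb)
        (by rw [← hj]; exact hFv)
      refine Or.inl ⟨hb, hFv, fun hc => hnc ((colGL_ne hF ht hfree hjne).mpr hc), ?_⟩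
      rintro ⟨i', j', hp⟩
      exact hnp ⟨i', j', (pairGL_iff hF ht hfree i j i' j').mpr hp⟩
    · rcases h.2.1 with hS | hj
      · obtain ⟨w, hwr, hwb, hwv⟩ := wit_GL hF ht hfree hS
        exact absurd ⟨w, hwb, hwv⟩ hnc
      · exact Or.inr ⟨h.1, hj⟩
    · omega
  · rintro (⟨hb, hv, hnc, hnp⟩ | ⟨hir, hjj⟩)
    · rcases hGcL hF ht hfree i j with h | h | h
      · have hjne : j ≠ j₀ := fun hj => no_t_j₀ hF ht hfree (by rw [← hj]; exact hb)
          (by rw [← hj]; exact hv)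
        refine ⟨hb, by rw [h.1]; exact hv, fun hc => hnc ((colGL_ne hF ht hfree hjne).mp hc), ?_⟩
        rintro ⟨i', j', hp⟩
        exact hnp ⟨i', j', (pairGL_iff hF ht hfree i j i' j').mp hp⟩
      · omega
      · exact absurd ⟨r, boxRCL hF ht hfree (Or.inl h.2.1),
          valRCL hF ht hfree (Or.inl h.2.1)⟩ hnc
    · subst hir; subst hjj
      refine ⟨hfree.1, hGrL hF ht hfree (Or.inr rfl), colGL_j₀_w hF ht hfree, ?_⟩
      rintro ⟨i', j', hp⟩
      have hp' := (pairGL_iff hF ht hfree i j i' j').mp hp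
      have := hp'.2.1
      have := hfree.2.1
      omega

end LopFree

/-- Full bookkeeping for one application of `Lop`. -/
theorem Lop_step {n : ℕ} {α : ℕ → ℕ} {F : ℕ → ℕ → ℕ} {t r : ℕ}
    (hF : IsSSF n α F) (htr : t < r) (ht : 1 ≤ t)
    (hne : {j | FreeTp1 n α F t r j}.Nonempty) :
    IsSSF n α (Lop n α r t F) ∧
    FreeTp1 n α F t r (sSup {j | FreeTp1 n α F t r j}) ∧
    (∀ i j, FreeTp1 n α (Lop n α r t F) t i j ↔
      FreeTp1 n α F t i j ∧ ¬(i = r ∧ j = sSup {j | FreeTp1 n α F t r j})) ∧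
    (∀ i j, FreeT n α (Lop n α r t F) t i j ↔
      FreeT n α F t i j ∨ (i = r ∧ j = sSup {j | FreeTp1 n α F t r j})) := by
  have hbdd : BddAbove {j | FreeTp1 n α F t r j} :=
    ⟨α r, fun j hj => hj.1.2.2.2⟩
  have hfree : FreeTp1 n α F t r (sSup {j | FreeTp1 n α F t r j}) :=
    Nat.sSup_mem hne hbdd
  have hmax : ∀ j, FreeTp1 n α F t r j → j ≤ sSup {j | FreeTp1 n α F t r j} :=
    fun j hj => le_csSup hbdd hj
  rw [Lop_eq_LopG hne]
  exact ⟨LopG_SSF hF htr ht hfree hmax, hfree,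
    fun i j => freeTp1_GL_iff hF ht hfree i j, fun i j => freeT_GL_iff hF ht hfree i j⟩

section Iter

set_option linter.unusedSectionVars false

variable {n : ℕ} {α : ℕ → ℕ} {t r : ℕ}

lemma freeT_finite (H : ℕ → ℕ → ℕ) : {j | FreeT n α H t r j}.Finite :=
  (Set.finite_Icc 1 (α r)).subset (fun j hj => ⟨hj.1.2.2.1, hj.1.2.2.2⟩)

lemma freeTp1_finite (H : ℕ → ℕ → ℕ) : {j | FreeTp1 n α H t r j}.Finite :=
  (Set.finite_Icc 1 (α r)).subset (fun j hj => ⟨hj.1.2.2.1, hj.1.2.2.2⟩)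

lemma Rop_iter {F : ℕ → ℕ → ℕ} (hF : IsSSF n α F) (htr : t < r) :
    ∀ k, k ≤ {j | FreeT n α F t r j}.ncard →
    IsSSF n α ((Rop n α r t)^[k] F) ∧
    (∀ i j, i ≠ r → (FreeT n α ((Rop n α r t)^[k] F) t i j ↔ FreeT n α F t i j)) ∧
    (∀ i j, i ≠ r → (FreeTp1 n α ((Rop n α r t)^[k] F) t i j ↔ FreeTp1 n α F t i j)) ∧
    {j | FreeT n α ((Rop n α r t)^[k] F) t r j}.ncard
      = {j | FreeT n α F t r j}.ncard - k ∧
    {j | FreeTp1 n α ((Rop n α r t)^[k] F) t r j}.ncard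
      = {j | FreeTp1 n α F t r j}.ncard + k := by
  intro k
  induction k with
  | zero => exact fun _ => ⟨hF, fun _ _ _ => Iff.rfl, fun _ _ _ => Iff.rfl, rfl, rfl⟩
  | succ k ih =>
    intro hk
    obtain ⟨hS, hT, hTp, hcT, hcTp⟩ := ih (by omega)
    set Fk := (Rop n α r t)^[k] F with hFk
    have hfin : {j | FreeT n α Fk t r j}.Finite := freeT_finite Fk
    have hfinp : {j | FreeTp1 n α Fk t r j}.Finite := freeTp1_finite Fk
    have hne : {j | FreeT n α Fk t r j}.Nonempty := by
      rw [← Set.ncard_pos hfin] at *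
      omega
    obtain ⟨hS', hfree', hiT, hiTp⟩ := Rop_step hS htr hne
    set j₀ := sInf {j | FreeT n α Fk t r j} with hj₀
    have hit : (Rop n α r t)^[k+1] F = Rop n α r t Fk := Function.iterate_succ_apply' _ _ _
    have hTset : {j | FreeT n α ((Rop n α r t)^[k+1] F) t r j}
        = {j | FreeT n α Fk t r j} \ {j₀} := by
      ext j
      rw [hit]
      simp only [Set.mem_setOf_eq, Set.mem_diff, Set.mem_singleton_iff]
      rw [hiT r j]
      tauto
    have hTpset : {j | FreeTp1 n α ((Rop n α r t)^[k+1] F) t r j}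
        = insert j₀ {j | FreeTp1 n α Fk t r j} := by
      ext j
      rw [hit]
      simp only [Set.mem_setOf_eq, Set.mem_insert_iff]
      rw [hiTp r j]
      tauto
    have hnotmem : j₀ ∉ {j | FreeTp1 n α Fk t r j} := by
      intro hmem
      have h1 := hmem.2.1
      have h2 := hfree'.2.1
      omega
    refine ⟨by rw [hit]; exact hS', ?_, ?_, ?_, ?_⟩
    · intro i j hir
      rw [hit, hiT i j]
      constructor
      · intro h; exact (hT i j hir).mp h.1
      · intro h; exact ⟨(hT i j hir).mpr h, fun hc => hir hc.1⟩
    · intro i j hir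
      rw [hit, hiTp i j]
      constructor
      · intro h
        rcases h with h | h
        · exact (hTp i j hir).mp h
        · exact absurd h.1 hir
      · intro h; exact Or.inl ((hTp i j hir).mpr h)
    · have hmem : j₀ ∈ {j | FreeT n α Fk t r j} := hfree'
      rw [hTset, Set.ncard_diff_singleton_of_mem hmem, hcT]
      omega
    · rw [hTpset, Set.ncard_insert_of_notMem hnotmem hfinp, hcTp]
      omega

lemma Lop_iter {F : ℕ → ℕ → ℕ} (hF : IsSSF n α F) (htr : t < r) (ht : 1 ≤ t) :
    ∀ k, k ≤ {j | FreeTp1 n α F t r j}.ncard →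
    IsSSF n α ((Lop n α r t)^[k] F) ∧
    (∀ i j, i ≠ r → (FreeT n α ((Lop n α r t)^[k] F) t i j ↔ FreeT n α F t i j)) ∧
    (∀ i j, i ≠ r → (FreeTp1 n α ((Lop n α r t)^[k] F) t i j ↔ FreeTp1 n α F t i j)) ∧
    {j | FreeTp1 n α ((Lop n α r t)^[k] F) t r j}.ncard
      = {j | FreeTp1 n α F t r j}.ncard - k ∧
    {j | FreeT n α ((Lop n α r t)^[k] F) t r j}.ncard
      = {j | FreeT n α F t r j}.ncard + k := by
  intro k
  induction k with
  | zero => exact fun _ => ⟨hF, fun _ _ _ => Iff.rfl, fun _ _ _ => Iff.rfl, rfl, rfl⟩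
  | succ k ih =>
    intro hk
    obtain ⟨hS, hT, hTp, hcTp, hcT⟩ := ih (by omega)
    set Fk := (Lop n α r t)^[k] F with hFk
    have hfin : {j | FreeT n α Fk t r j}.Finite := freeT_finite Fk
    have hfinp : {j | FreeTp1 n α Fk t r j}.Finite := freeTp1_finite Fk
    have hne : {j | FreeTp1 n α Fk t r j}.Nonempty := by
      rw [← Set.ncard_pos hfinp] at *
      omega
    obtain ⟨hS', hfree', hiTp, hiT⟩ := Lop_step hS htr ht hne
    set j₀ := sSup {j | FreeTp1 n α Fk t r j} with hj₀
    have hit : (Lop n α r t)^[k+1] F = Lop n α r t Fk := Function.iterate_succ_apply' _ _ _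
    have hTpset : {j | FreeTp1 n α ((Lop n α r t)^[k+1] F) t r j}
        = {j | FreeTp1 n α Fk t r j} \ {j₀} := by
      ext j
      rw [hit]
      simp only [Set.mem_setOf_eq, Set.mem_diff, Set.mem_singleton_iff]
      rw [hiTp r j]
      tauto
    have hTset : {j | FreeT n α ((Lop n α r t)^[k+1] F) t r j}
        = insert j₀ {j | FreeT n α Fk t r j} := by
      ext j
      rw [hit]
      simp only [Set.mem_setOf_eq, Set.mem_insert_iff]
      rw [hiT r j]
      tauto
    have hnotmem : j₀ ∉ {j | FreeT n α Fk t r j} := by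
      intro hmem
      have h1 := hmem.2.1
      have h2 := hfree'.2.1
      omega
    refine ⟨by rw [hit]; exact hS', ?_, ?_, ?_, ?_⟩
    · intro i j hir
      rw [hit, hiT i j]
      constructor
      · intro h
        rcases h with h | h
        · exact (hT i j hir).mp h
        · exact absurd h.1 hir
      · intro h; exact Or.inl ((hT i j hir).mpr h)
    · intro i j hir
      rw [hit, hiTp i j]
      constructor
      · intro h; exact (hTp i j hir).mp h.1
      · intro h; exact ⟨(hTp i j hir).mpr h, fun hc => hir hc.1⟩
    · have hmem : j₀ ∈ {j | FreeTp1 n α Fk t r j} := hfree'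
      rw [hTpset, Set.ncard_diff_singleton_of_mem hmem, hcTp]
      omega
    · rw [hTset, Set.ncard_insert_of_notMem hnotmem hfin, hcT]
      omega

lemma Phi_eq (F : ℕ → ℕ → ℕ) :
    Phi n α r t F =
      if {j | FreeT n α F t r j}.ncard < {j | FreeTp1 n α F t r j}.ncard then
        (Lop n α r t)^[{j | FreeTp1 n α F t r j}.ncard - {j | FreeT n α F t r j}.ncard] F
      else if {j | FreeTp1 n α F t r j}.ncard < {j | FreeT n α F t r j}.ncard then
        (Rop n α r t)^[{j | FreeT n α F t r j}.ncard - {j | FreeTp1 n α F t r j}.ncard] F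
      else F := rfl

theorem Phi_step {F : ℕ → ℕ → ℕ} (hF : IsSSF n α F) (htr : t < r) (ht : 1 ≤ t) :
    IsSSF n α (Phi n α r t F) ∧
    (∀ i j, i ≠ r → (FreeT n α (Phi n α r t F) t i j ↔ FreeT n α F t i j)) ∧
    (∀ i j, i ≠ r → (FreeTp1 n α (Phi n α r t F) t i j ↔ FreeTp1 n α F t i j)) ∧
    {j | FreeT n α (Phi n α r t F) t r j}.ncard = {j | FreeTp1 n α F t r j}.ncard ∧
    {j | FreeTp1 n α (Phi n α r t F) t r j}.ncard = {j | FreeT n α F t r j}.ncard := by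
  rw [Phi_eq]
  set a := {j | FreeT n α F t r j}.ncard with ha
  set b := {j | FreeTp1 n α F t r j}.ncard with hb
  by_cases h1 : a < b
  · rw [if_pos h1]
    obtain ⟨hS, hT, hTp, hcTp, hcT⟩ := Lop_iter hF htr ht (b - a) (by omega)
    exact ⟨hS, hT, hTp, by rw [hcT]; omega, by rw [hcTp]; omega⟩
  · rw [if_neg h1]
    by_cases h2 : b < a
    · rw [if_pos h2]
      obtain ⟨hS, hT, hTp, hcT, hcTp⟩ := Rop_iter hF htr (a - b) (by omega)
      exact ⟨hS, hT, hTp, by rw [hcT]; omega, by rw [hcTp]; omega⟩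
    · rw [if_neg h2]
      exact ⟨hF, fun _ _ _ => Iff.rfl, fun _ _ _ => Iff.rfl, by omega, by omega⟩

end Iter

section Final

set_option linter.unusedSectionVars false

lemma fold_inv {n : ℕ} {α : ℕ → ℕ} {r : ℕ} (hr : 1 ≤ r) :
    ∀ (l : List ℕ), (∀ i ∈ l, r < i) → l.Nodup → ∀ F, IsSSF n α F →
    IsSSF n α (l.foldl (fun G i => Phi n α i r G) F) ∧
    (∀ w, w ∉ l → ∀ j,
      (FreeT n α (l.foldl (fun G i => Phi n α i r G) F) r w j ↔ FreeT n α F r w j) ∧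
      (FreeTp1 n α (l.foldl (fun G i => Phi n α i r G) F) r w j ↔ FreeTp1 n α F r w j)) ∧
    (∀ w, w ∈ l →
      {j | FreeT n α (l.foldl (fun G i => Phi n α i r G) F) r w j}.ncard
        = {j | FreeTp1 n α F r w j}.ncard ∧
      {j | FreeTp1 n α (l.foldl (fun G i => Phi n α i r G) F) r w j}.ncard
        = {j | FreeT n α F r w j}.ncard) := by
  intro l
  induction l with
  | nil =>
    intro _ _ F hF
    exact ⟨hF, fun w _ j => ⟨Iff.rfl, Iff.rfl⟩, fun w hw => absurd hw (List.not_mem_nil)⟩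
  | cons i l' ih =>
    intro hmem hnd F hF
    have hri : r < i := hmem i (List.mem_cons_self)
    obtain ⟨hP1, hP2, hP3, hP4, hP5⟩ := Phi_step (F := F) (t := r) (r := i) hF hri hr
    have hfold : (i :: l').foldl (fun G i => Phi n α i r G) F
        = l'.foldl (fun G i => Phi n α i r G) (Phi n α i r F) := rfl
    have hinl' : i ∉ l' := (List.nodup_cons.mp hnd).1
    obtain ⟨hI1, hI2, hI3⟩ := ih (fun w hw => hmem w (List.mem_cons_of_mem i hw))
      (List.nodup_cons.mp hnd).2 (Phi n α i r F) hP1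
    rw [hfold]
    refine ⟨hI1, ?_, ?_⟩
    · intro w hw j
      have hw1 : w ≠ i := fun he => hw (he ▸ List.mem_cons_self)
      have hw2 : w ∉ l' := fun he => hw (List.mem_cons_of_mem i he)
      exact ⟨(hI2 w hw2 j).1.trans (hP2 w j hw1), (hI2 w hw2 j).2.trans (hP3 w j hw1)⟩
    · intro w hw
      rcases List.mem_cons.mp hw with rfl | hw'
      · have hs1 : {j | FreeT n α (l'.foldl (fun G i => Phi n α i r G) (Phi n α w r F)) r w j}
            = {j | FreeT n α (Phi n α w r F) r w j} :=
          Set.ext fun j => (hI2 w hinl' j).1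
        have hs2 : {j | FreeTp1 n α (l'.foldl (fun G i => Phi n α i r G) (Phi n α w r F)) r w j}
            = {j | FreeTp1 n α (Phi n α w r F) r w j} :=
          Set.ext fun j => (hI2 w hinl' j).2
        rw [hs1, hs2]
        exact ⟨hP4, hP5⟩
      · have hwi : w ≠ i := fun he => hinl' (he ▸ hw')
        have hs1 : {j | FreeTp1 n α (Phi n α i r F) r w j} = {j | FreeTp1 n α F r w j} :=
          Set.ext fun j => hP3 w j hwi
        have hs2 : {j | FreeT n α (Phi n α i r F) r w j} = {j | FreeT n α F r w j} :=
          Set.ext fun j => hP2 w j hwi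
        obtain ⟨h1, h2⟩ := hI3 w hw'
        rw [hs1] at h1
        rw [hs2] at h2
        exact ⟨h1, h2⟩

lemma row_decomp {n : ℕ} {α : ℕ → ℕ} {Q : ℕ → ℕ → Prop}
    (hQ : ∀ i j, Q i j → Box n α i j) {r : ℕ} (hrn : r ≤ n) :
    {p : ℕ × ℕ | r < p.1 ∧ Q p.1 p.2}.ncard
      = ∑ i ∈ Finset.Icc (r+1) n, {j | Q i j}.ncard := by
  have hrow : ∀ i, {j | Q i j}.Finite := fun i =>
    (Set.finite_Icc 1 (α i)).subset (fun j hj => ⟨(hQ i j hj).2.2.1, (hQ i j hj).2.2.2⟩)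
  have aux : ∀ m, {p : ℕ × ℕ | r < p.1 ∧ p.1 ≤ r + m ∧ Q p.1 p.2}.Finite ∧
      {p : ℕ × ℕ | r < p.1 ∧ p.1 ≤ r + m ∧ Q p.1 p.2}.ncard
        = ∑ i ∈ Finset.Icc (r+1) (r+m), {j | Q i j}.ncard := by
    intro m
    induction m with
    | zero =>
      have he : {p : ℕ × ℕ | r < p.1 ∧ p.1 ≤ r + 0 ∧ Q p.1 p.2} = ∅ := by
        ext p
        simp only [Set.mem_setOf_eq, Set.mem_empty_iff_false, iff_false]
        rintro ⟨h1, h2, -⟩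
        omega
      rw [he]
      rw [Finset.Icc_eq_empty (by omega : ¬ r + 1 ≤ r + 0)]
      simp
    | succ m ih =>
      have hinj : Function.Injective (fun j : ℕ => ((r+m+1 : ℕ), j)) := by
        intro x y h
        simpa using h
      have hsplit : {p : ℕ × ℕ | r < p.1 ∧ p.1 ≤ r + (m+1) ∧ Q p.1 p.2}
          = {p : ℕ × ℕ | r < p.1 ∧ p.1 ≤ r + m ∧ Q p.1 p.2}
            ∪ (fun j => ((r+m+1 : ℕ), j)) '' {j | Q (r+m+1) j} := by
        ext ⟨a, b⟩
        simp only [Set.mem_setOf_eq, Set.mem_union, Set.mem_image]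
        constructor
        · rintro ⟨h1, h2, h3⟩
          rcases Nat.lt_or_ge a (r+m+1) with h4 | h4
          · exact Or.inl ⟨h1, by omega, h3⟩
          · have ha : a = r + m + 1 := by omega
            subst ha
            exact Or.inr ⟨b, h3, rfl⟩
        · rintro (⟨h1, h2, h3⟩ | ⟨x, hx, heq⟩)
          · exact ⟨h1, by omega, h3⟩
          · cases heq
            exact ⟨by omega, by omega, hx⟩
      have hdisj : Disjoint {p : ℕ × ℕ | r < p.1 ∧ p.1 ≤ r + m ∧ Q p.1 p.2}
          ((fun j => ((r+m+1 : ℕ), j)) '' {j | Q (r+m+1) j}) := by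
        rw [Set.disjoint_left]
        rintro ⟨a, b⟩ ⟨h1, h2, h3⟩ ⟨x, hx, heq⟩
        cases heq
        omega
      have hfim : ((fun j => ((r+m+1 : ℕ), j)) '' {j | Q (r+m+1) j}).Finite :=
        (hrow _).image _
      constructor
      · rw [hsplit]
        exact ih.1.union hfim
      · rw [hsplit, Set.ncard_union_eq hdisj ih.1 hfim, ih.2,
          Set.ncard_image_of_injective _ hinj]
        have hstep : r + (m + 1) = (r + m) + 1 := rfl
        rw [hstep, Finset.sum_Icc_succ_top (by omega : r + 1 ≤ r + m + 1)]
  have hset : {p : ℕ × ℕ | r < p.1 ∧ Q p.1 p.2}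
      = {p : ℕ × ℕ | r < p.1 ∧ p.1 ≤ r + (n - r) ∧ Q p.1 p.2} := by
    ext p
    simp only [Set.mem_setOf_eq]
    constructor
    · rintro ⟨h1, h2⟩
      have := (hQ _ _ h2).2.1
      exact ⟨h1, by omega, h2⟩
    · rintro ⟨h1, -, h3⟩
      exact ⟨h1, h3⟩
  rw [hset, (aux (n - r)).2]
  congr 1
  congr 1
  omega

end Final

theorem stmt11' (n : ℕ) (α : ℕ → ℕ) (r : ℕ) (hr : FirstAscent n α r)
    (F' : ℕ → ℕ → ℕ) (hF' : IsSSF n (swapComp α r) F') :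
    {p : ℕ × ℕ | r < p.1 ∧ FreeT n (swapComp α r) F' r p.1 p.2}.ncard
      = {p : ℕ × ℕ | r < p.1 ∧
          FreeTp1 n (swapComp α r) (PhiAll n (swapComp α r) r F') r p.1 p.2}.ncard ∧
    {p : ℕ × ℕ | r < p.1 ∧ FreeTp1 n (swapComp α r) F' r p.1 p.2}.ncard
      = {p : ℕ × ℕ | r < p.1 ∧
          FreeT n (swapComp α r) (PhiAll n (swapComp α r) r F') r p.1 p.2}.ncard := by
  obtain ⟨hr1, hrn, -, -⟩ := hr
  set α' := swapComp α r with hα'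
  set L := List.range' (r+1) (n - r) with hL
  have hPA : PhiAll n α' r F' = L.foldl (fun G i => Phi n α' i r G) F' := rfl
  have hmemL : ∀ i ∈ L, r < i := by
    intro i hi
    have := List.mem_range'_1.mp hi
    omega
  obtain ⟨hG1, hG2, hG3⟩ := fold_inv hr1 L hmemL (List.nodup_range') F' hF'
  have hd1 : {p : ℕ × ℕ | r < p.1 ∧ FreeT n α' F' r p.1 p.2}.ncard
      = ∑ i ∈ Finset.Icc (r+1) n, {j | FreeT n α' F' r i j}.ncard :=
    row_decomp (fun i j h => h.1) (by omega)
  have hd2 : {p : ℕ × ℕ | r < p.1 ∧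
        FreeTp1 n α' (L.foldl (fun G i => Phi n α' i r G) F') r p.1 p.2}.ncard
      = ∑ i ∈ Finset.Icc (r+1) n,
          {j | FreeTp1 n α' (L.foldl (fun G i => Phi n α' i r G) F') r i j}.ncard :=
    row_decomp (fun i j h => h.1) (by omega)
  have hd3 : {p : ℕ × ℕ | r < p.1 ∧ FreeTp1 n α' F' r p.1 p.2}.ncard
      = ∑ i ∈ Finset.Icc (r+1) n, {j | FreeTp1 n α' F' r i j}.ncard :=
    row_decomp (fun i j h => h.1) (by omega)
  have hd4 : {p : ℕ × ℕ | r < p.1 ∧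
        FreeT n α' (L.foldl (fun G i => Phi n α' i r G) F') r p.1 p.2}.ncard
      = ∑ i ∈ Finset.Icc (r+1) n,
          {j | FreeT n α' (L.foldl (fun G i => Phi n α' i r G) F') r i j}.ncard :=
    row_decomp (fun i j h => h.1) (by omega)
  have hiL : ∀ i ∈ Finset.Icc (r+1) n, i ∈ L := by
    intro i hi
    have h2 := Finset.mem_Icc.mp hi
    rw [hL]
    apply List.mem_range'_1.mpr
    omega
  rw [hPA]
  constructor
  · rw [hd1, hd2]
    refine Finset.sum_congr rfl ?_
    intro i hi
    exact ((hG3 i (hiL i hi)).2).symm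
  · rw [hd3, hd4]
    refine Finset.sum_congr rfl ?_
    intro i hi
    exact ((hG3 i (hiL i hi)).1).symm

/-- `Φ_r` exchanges the numbers of free entries `r` and `r+1` strictly below
row `r`. -/
theorem stmt11 (n : ℕ) (α : ℕ → ℕ) (r : ℕ) (hr : FirstAscent n α r)
    (F' : ℕ → ℕ → ℕ) (hF' : IsSSF n (swapComp α r) F') :
    {p : ℕ × ℕ | r < p.1 ∧ FreeT n (swapComp α r) F' r p.1 p.2}.ncard
      = {p : ℕ × ℕ | r < p.1 ∧
          FreeTp1 n (swapComp α r) (PhiAll n (swapComp α r) r F') r p.1 p.2}.ncard ∧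
    {p : ℕ × ℕ | r < p.1 ∧ FreeTp1 n (swapComp α r) F' r p.1 p.2}.ncard
      = {p : ℕ × ℕ | r < p.1 ∧
          FreeT n (swapComp α r) (PhiAll n (swapComp α r) r F') r p.1 p.2}.ncard :=
  stmt11' n α r hr F' hF'

end Skyline
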